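/- arXiv:math/0602456 — 4 statements merged into one kernel-verified Lean document; each statement's English description precedes it below -/
import Mathlib

section
/- For every k ≥ 1 and every normalized fully k-ary string s of length n, the flip grouping distance satisfies d_g(s) ≥ n − k. -/
/-- Prefix reversal (flip) of the first `i` symbols of `s`. -/
def pflip (i : ℕ) (s : List ℕ) : List ℕ := (s.take i).reverse ++ s.drop i

/-- One flip step: `t` is obtained from `s` by some flip `f^(i)` with `1 ≤ i ≤ |s|`. -/
def FlipStep (s t : List ℕ) : Prop := ∃ i, 1 ≤ i ∧ i ≤ s.length ∧ t = pflip i s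

/-- `ReachIn m s t`: `t` can be obtained from `s` by exactly `m` flips. -/
def ReachIn : ℕ → List ℕ → List ℕ → Prop
  | 0 => fun s t => s = t
  | (m+1) => fun s t => ∃ u, FlipStep s u ∧ ReachIn m u t

/-- Flip distance: minimum number of flips transforming `s` into `t`. -/
noncomputable def flipDist (s t : List ℕ) : ℕ := sInf {m | ReachIn m s t}

/-- Two strings are compatible if every symbol occurs equally often in both. -/
def Compatible (s t : List ℕ) : Prop := ∀ a, s.count a = t.count a

/-- A string is fully `k`-ary if the set of symbols occurring in it is exactly `{0,…,k-1}`. -/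
def FullyKary (k : ℕ) (s : List ℕ) : Prop := ∀ a, a ∈ s ↔ a < k

/-- A string is normalized if no two adjacent symbols are equal. -/
def Normalized (s : List ℕ) : Prop := s.Chain' (· ≠ ·)

/-- A string is grouped if the occurrences of each symbol are consecutive. -/
def Grouped (s : List ℕ) : Prop :=
  ∀ i j l : Fin s.length, i < j → j < l → s.get i = s.get l → s.get j = s.get i

/-- Flip grouping distance: minimum number of flips transforming `s` into some grouped string. -/
noncomputable def groupDist (s : List ℕ) : ℕ := sInf {m | ∃ t, Grouped t ∧ ReachIn m s t}

/-- Flip sorting distance: flip distance from `s` to its non-descending rearrangement `I(s)`. -/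
noncomputable def sortDist (s : List ℕ) : ℕ := flipDist s (s.insertionSort (· ≤ ·))

/-- `rep w m` is the concatenation of `m` copies of the string `w`. -/
def rep (w : List ℕ) (m : ℕ) : List ℕ := (List.replicate m w).flatten

def pot : List ℕ → ℕ
  | [] => 0
  | [_] => 0
  | a :: b :: l => (if a = b then 1 else 0) + pot (b :: l)

@[simp] lemma pot_nil : pot [] = 0 := rfl

lemma pot_cons (a : ℕ) (l : List ℕ) :
    pot (a :: l) = (if l.head? = some a then 1 else 0) + pot l := by
  cases l with
  | nil => simp [pot]
  | cons b t => simp [pot, eq_comm]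

lemma pot_append_le (l r : List ℕ) : pot (l ++ r) ≤ pot l + pot r + 1 := by
  induction l with
  | nil => simp
  | cons a l ih =>
    rw [List.cons_append, pot_cons, pot_cons]
    cases l with
    | nil => simp; split <;> omega
    | cons b l' => simp only [List.cons_append, List.head?_cons, Option.some.injEq] at *; omega

lemma le_pot_append (l r : List ℕ) : pot l + pot r ≤ pot (l ++ r) := by
  induction l with
  | nil => simp
  | cons a l ih =>
    rw [List.cons_append, pot_cons, pot_cons]
    cases l with
    | nil => simp
    | cons b l' => simp only [List.cons_append, List.head?_cons, Option.some.injEq] at *; omega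

lemma pot_concat (l : List ℕ) (a : ℕ) :
    pot (l ++ [a]) = (if l.getLast? = some a then 1 else 0) + pot l := by
  induction l with
  | nil => simp [pot]
  | cons b l ih =>
    rw [List.cons_append, pot_cons, pot_cons, ih]
    cases l with
    | nil => simp [eq_comm]
    | cons c l' => simp only [List.cons_append, List.head?_cons, List.getLast?_cons_cons, Option.some.injEq]; omega

lemma pot_reverse (l : List ℕ) : pot l.reverse = pot l := by
  induction l with
  | nil => rfl
  | cons a l ih =>
    rw [List.reverse_cons, pot_concat, ih, pot_cons, List.getLast?_reverse]

lemma pot_flip (i : ℕ) (s : List ℕ) : pot (pflip i s) ≤ pot s + 1 := by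
  have h1 := pot_append_le (s.take i).reverse (s.drop i)
  rw [pot_reverse] at h1
  have h2 := le_pot_append (s.take i) (s.drop i)
  rw [List.take_append_drop] at h2
  unfold pflip; omega

lemma pot_normalized {s : List ℕ} (h : Normalized s) : pot s = 0 := by
  induction s with
  | nil => rfl
  | cons a l ih =>
    rw [pot_cons]
    cases l with
    | nil => rfl
    | cons b t =>
      simp only [Normalized, List.Chain', List.isChain_cons_cons] at h
      simp [ih h.2, Ne.symm h.1]

lemma pflip_perm (i : ℕ) (s : List ℕ) : (pflip i s).Perm s := by
  have h1 : ((s.take i).reverse ++ s.drop i).Perm (s.take i ++ s.drop i) :=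
    (s.take i).reverse_perm.append_right _
  rwa [List.take_append_drop] at h1

lemma reach_perm : ∀ m s t, ReachIn m s t → s.Perm t := by
  intro m
  induction m with
  | zero => intro s t h; exact h ▸ List.Perm.refl s
  | succ m ih =>
    rintro s t ⟨u, ⟨i, _, _, rfl⟩, hr⟩
    exact ((pflip_perm i s).symm).trans (ih _ _ hr)

lemma reach_pot : ∀ m s t, ReachIn m s t → pot t ≤ pot s + m := by
  intro m
  induction m with
  | zero => intro s t h; subst h; omega
  | succ m ih =>
    rintro s t ⟨u, ⟨i, _, _, rfl⟩, hr⟩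
    have := ih _ _ hr
    have := pot_flip i s
    omega

lemma reach_trans : ∀ m₁ m₂ s u t, ReachIn m₁ s u → ReachIn m₂ u t →
    ReachIn (m₁ + m₂) s t := by
  intro m₁
  induction m₁ with
  | zero => intro m₂ s u t h1 h2; rw [show 0 + m₂ = m₂ by omega]; exact h1 ▸ h2
  | succ m ih =>
    rintro m₂ s u t ⟨v, hv, hr⟩ h2
    rw [show m + 1 + m₂ = (m + m₂) + 1 by omega]
    exact ⟨v, hv, ih _ _ _ _ hr h2⟩

lemma pflip_append {i : ℕ} {u : List ℕ} (w : List ℕ) (h : i ≤ u.length) :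
    pflip i (u ++ w) = pflip i u ++ w := by
  unfold pflip
  rw [List.take_append_of_le_length h, List.drop_append_of_le_length h, List.append_assoc]

lemma reach_append : ∀ m u v (w : List ℕ), ReachIn m u v → ReachIn m (u ++ w) (v ++ w) := by
  intro m
  induction m with
  | zero => intro u v w h; exact h ▸ rfl
  | succ m ih =>
    rintro u v w ⟨x, ⟨i, h1, h2, rfl⟩, hr⟩
    exact ⟨pflip i u ++ w, ⟨i, h1, by simp; omega, (pflip_append w h2).symm⟩, ih _ _ _ hr⟩

lemma reach_exists : ∀ n s t, s.length ≤ n → s.Perm t → ∃ m, ReachIn m s t := by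
  intro n
  induction n with
  | zero =>
    intro s t hl hp
    have : s = [] := List.length_eq_zero_iff.mp (by omega)
    subst this
    exact ⟨0, hp.nil_eq⟩
  | succ n ih =>
    intro s t hl hp
    rcases t.eq_nil_or_concat with rfl | ⟨t', a, rfl⟩
    · exact ⟨0, hp.eq_nil⟩
    · simp only [List.concat_eq_append] at hp ⊢
      have ha : a ∈ s := hp.mem_iff.mpr (by simp)
      obtain ⟨l, r, rfl⟩ := List.append_of_mem ha
      -- first flip: prefix of length l.length + 1
      set s1 : List ℕ := a :: (l.reverse ++ r) with hs1
      have hf1 : FlipStep (l ++ a :: r) s1 := by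
        refine ⟨l.length + 1, by omega, by simp, ?_⟩
        have h1 : l ++ a :: r = (l ++ [a]) ++ r := by simp
        have hlen : (l ++ [a]).length = l.length + 1 := by simp
        rw [h1, pflip, ← hlen, List.take_left, List.drop_left, List.reverse_append]
        simp [hs1]
      set b : List ℕ := (l.reverse ++ r).reverse with hb
      have hf2 : FlipStep s1 (b ++ [a]) := by
        refine ⟨s1.length, by simp [hs1], le_refl _, ?_⟩
        rw [pflip, List.take_length, List.drop_length, List.append_nil, hs1]
        simp [hb]
      have hs1p : s1.Perm (l ++ a :: r) :=
        (((l.reverse_perm.append_right r).cons a)).trans List.perm_middle.symm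
      have hperm : b.Perm t' := by
        have e : b ++ [a] = s1.reverse := by rw [hs1, List.reverse_cons]
        have h2 : (b ++ [a]).Perm (t' ++ [a]) := by
          rw [e]; exact s1.reverse_perm.trans (hs1p.trans hp)
        exact (List.perm_append_right_iff [a]).mp h2
      have hblen : b.length ≤ n := by
        have h4 : (l ++ a :: r).length ≤ n + 1 := hl
        simp only [List.length_append, List.length_cons] at h4
        simp only [hb, List.length_reverse, List.length_append]
        omega
      obtain ⟨m, hm⟩ := ih b t' hblen hperm
      have h3 : ReachIn 2 (l ++ a :: r) (b ++ [a]) := ⟨s1, hf1, ⟨b ++ [a], hf2, rfl⟩⟩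
      exact ⟨2 + m, reach_trans 2 m _ _ _ h3 (reach_append m b t' [a] hm)⟩

lemma grouped_getElem {t : List ℕ} (ht : Grouped t) {i j l : ℕ}
    (hij : i < j) (hjl : j < l) (hl : l < t.length)
    (he : t[i]'(by omega) = t[l]'hl) : t[j]'(by omega) = t[i]'(by omega) := by
  have h := ht ⟨i, by omega⟩ ⟨j, by omega⟩ ⟨l, hl⟩
    (Fin.mk_lt_mk.mpr hij) (Fin.mk_lt_mk.mpr hjl)
  simp only [List.get_eq_getElem] at h
  exact h he

lemma grouped_tail {a : ℕ} {t : List ℕ} (h : Grouped (a :: t)) : Grouped t := by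
  intro i j l hij hjl he
  have hij' : (i : ℕ) < j := hij
  have hjl' : (j : ℕ) < l := hjl
  simp only [List.get_eq_getElem] at he ⊢
  have hl1 : (l : ℕ) + 1 < (a :: t).length := by simp
  have := grouped_getElem h (i := (i:ℕ)+1) (j := (j:ℕ)+1) (l := (l:ℕ)+1)
    (by omega) (by omega) hl1 (by simpa using he)
  simpa using this

lemma grouped_count : ∀ t : List ℕ, Grouped t → t.length ≤ pot t + t.toFinset.card := by
  intro t
  induction t with
  | nil => simp
  | cons a u ih =>
    intro h
    have ihu := ih (grouped_tail h)
    cases u with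
    | nil => simp [pot]
    | cons b r =>
      by_cases hab : a = b
      · subst hab
        have h1 : pot (a :: a :: r) = 1 + pot (a :: r) := by simp [pot]
        have h2 : (a :: a :: r).toFinset = (a :: r).toFinset := by simp
        rw [h1, h2]
        simp only [List.length_cons] at *
        omega
      · have ham : a ∉ (b :: r) := by
          intro hmem
          rcases List.mem_iff_getElem.mp hmem with ⟨p, hp, hgp⟩
          rcases Nat.eq_zero_or_pos p with rfl | hpos
          · simp at hgp; exact hab hgp.symm
          · have hl2 : p + 1 < (a :: b :: r).length := by
              simp only [List.length_cons] at hp ⊢; omega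
            have h3 := grouped_getElem h (i := 0) (j := 1) (l := p + 1)
              (by omega) (by omega) hl2 (by simpa using hgp.symm)
            simp at h3
            exact hab h3.symm
        have h4 : (a :: b :: r).toFinset.card = (b :: r).toFinset.card + 1 := by
          rw [List.toFinset_cons, Finset.card_insert_of_notMem (by simpa using ham)]
        have h5 : pot (a :: b :: r) = pot (b :: r) := by simp [pot, hab]
        simp only [List.length_cons] at *
        omega

lemma sorted_grouped {t : List ℕ} (h : t.Pairwise (· ≤ ·)) : Grouped t := by
  intro i j l hij hjl he
  have h1 : t.get i ≤ t.get j := h.rel_get_of_lt hij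
  have h2 : t.get j ≤ t.get l := h.rel_get_of_lt hjl
  omega

theorem grouping_lower_bound (k n : ℕ) (hk : 1 ≤ k) (s : List ℕ)
    (hlen : s.length = n) (hfull : FullyKary k s) (hnorm : Normalized s) :
    n - k ≤ groupDist s := by
  obtain ⟨m0, hm0⟩ := reach_exists s.length s (s.insertionSort (· ≤ ·)) le_rfl
    (List.perm_insertionSort (· ≤ ·) s).symm
  have hne : {m | ∃ t, Grouped t ∧ ReachIn m s t}.Nonempty :=
    ⟨m0, ⟨_, sorted_grouped (List.pairwise_insertionSort (· ≤ ·) s), hm0⟩⟩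
  obtain ⟨t, hg, hr⟩ := Nat.sInf_mem hne
  have hperm := reach_perm _ _ _ hr
  have h1 := reach_pot _ _ _ hr
  rw [pot_normalized hnorm] at h1
  have h2 := grouped_count t hg
  have hlt : t.length = n := by rw [← hperm.length_eq, hlen]
  have hfin : t.toFinset = Finset.range k := by
    rw [← List.toFinset_eq_of_perm _ _ hperm]
    ext a
    simp [List.mem_toFinset, hfull a, Finset.mem_range]
  have hcard : t.toFinset.card = k := by rw [hfin, Finset.card_range]
  rw [groupDist]
  omega
end

section
/- For every k ≥ 2 and every normalized fully k-ary string s of length n, the flip grouping distance satisfies d_g(s) ≤ n − 2. -/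
namespace GroupingAux

def nb : List ℕ → ℕ
  | [] => 0
  | a :: l => nb l + (if l.head? = some a then 0 else 1)

lemma nb_cons (a : ℕ) (l : List ℕ) :
    nb (a :: l) = nb l + (if l.head? = some a then 0 else 1) := rfl

lemma nb_pos {l : List ℕ} (h : l ≠ []) : 1 ≤ nb l := by
  induction l with
  | nil => simp at h
  | cons a l ih =>
    rw [nb_cons]
    cases l with
    | nil => simp [nb]
    | cons b l' => have := ih (by simp); omega

lemma nb_split (u : List ℕ) (x : ℕ) (v : List ℕ) :
    nb (u ++ x :: v) + 1 = nb (u ++ [x]) + nb (x :: v) := by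
  induction u with
  | nil =>
    simp only [List.nil_append]
    have : nb [x] = 1 := by simp [nb]
    omega
  | cons y u ih =>
    have hh : (u ++ x :: v).head? = (u ++ [x]).head? := by cases u <;> simp
    simp only [List.cons_append, nb_cons, hh] at ih ⊢
    omega

lemma nb_rev_concat : ∀ (l : List ℕ) (x : ℕ), nb (l.reverse ++ [x]) = nb (x :: l) := by
  intro l
  induction l with
  | nil => intro x; simp
  | cons b l ih =>
    intro x
    have h := nb_split l.reverse b [x]
    rw [ih b] at h
    have h2 : (b :: l).reverse ++ [x] = l.reverse ++ b :: [x] := by simp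
    rw [h2]
    have h3 : nb [b, x] = (if x = b then 0 else 1) + 1 := by
      simp [nb_cons, nb]; ring
    have h4 : nb (x :: b :: l) = nb (b :: l) + (if b = x then 0 else 1) := by
      simp [nb_cons]
    by_cases hbx : b = x
    · subst hbx; simp only [if_pos rfl] at h3 h4; omega
    · rw [if_neg hbx] at h4
      rw [if_neg (fun h' => hbx h'.symm)] at h3
      omega

lemma nb_reverse (l : List ℕ) : nb l.reverse = nb l := by
  cases l with
  | nil => rfl
  | cons a l => rw [List.reverse_cons, nb_rev_concat]

lemma nb_unif : ∀ (A : List ℕ) (a : ℕ) (w : List ℕ), (∀ x ∈ A, x = a) → A ≠ [] →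
    nb (A ++ w) = nb (a :: w) := by
  intro A
  induction A with
  | nil => intro a w _ h; simp at h
  | cons b A ih =>
    intro a w hA _
    have hb : b = a := hA b (by simp)
    subst hb
    cases A with
    | nil => simp
    | cons c A' =>
      have hc : c = b := hA c (by simp)
      rw [List.cons_append, nb_cons]
      have hh : ((c :: A') ++ w).head? = some b := by simp [hc]
      rw [hh, if_pos rfl]
      have := ih b w (fun x hx => hA x (by simp [hx])) (by simp)
      omega

lemma all_eq_of_nb_le_one : ∀ (l : List ℕ), nb l ≤ 1 → ∀ x ∈ l, ∀ y ∈ l, x = y := by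
  intro l
  induction l with
  | nil => simp
  | cons a l ih =>
    intro h x hx y hy
    cases l with
    | nil =>
      simp at hx hy; omega
    | cons b l' =>
      rw [nb_cons] at h
      by_cases hba : (b :: l').head? = some a
      · simp only [List.head?_cons, Option.some.injEq] at hba
        rw [if_pos (by simp [hba])] at h
        have hall := ih (by omega)
        have ha : a ∈ b :: l' := by rw [hba]; simp
        rcases List.mem_cons.mp hx with rfl | hx'
        · rcases List.mem_cons.mp hy with rfl | hy'
          · rfl
          · exact hall x ha y hy'
        · rcases List.mem_cons.mp hy with rfl | hy'
          · exact hall x hx' y ha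
          · exact hall x hx' y hy'
      · rw [if_neg hba] at h
        have := nb_pos (l := b :: l') (by simp)
        omega

lemma two_le_nb {l : List ℕ} (h : ∃ x ∈ l, ∃ y ∈ l, x ≠ y) : 2 ≤ nb l := by
  by_contra hc
  obtain ⟨x, hx, y, hy, hxy⟩ := h
  exact hxy (all_eq_of_nb_le_one l (by omega) x hx y hy)

lemma nb_normalized : ∀ {l : List ℕ}, l.Chain' (· ≠ ·) → nb l = l.length := by
  intro l
  induction l with
  | nil => intro _; rfl
  | cons a l ih =>
    intro h
    rw [List.Chain', List.isChain_cons] at h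
    rw [nb_cons, ih h.2]
    have hne : l.head? ≠ some a := fun hc => h.1 a hc rfl
    rw [if_neg hne]
    simp



lemma pflip_length (i : ℕ) (s : List ℕ) : (pflip i s).length = s.length := by
  simp [pflip]; omega

lemma pflip_mem (i : ℕ) (s : List ℕ) (x : ℕ) : x ∈ pflip i s ↔ x ∈ s := by
  unfold pflip
  rw [List.mem_append, List.mem_reverse, ← List.mem_append, List.take_append_drop]

lemma reachIn_mem : ∀ {m : ℕ} {u v : List ℕ}, ReachIn m u v → ∀ x, (x ∈ v ↔ x ∈ u) := by
  intro m
  induction m with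
  | zero => rintro u v h x; rw [show u = v from h]
  | succ m ih =>
    rintro u v ⟨w, ⟨i, _, _, rfl⟩, hr⟩ x
    rw [ih hr x, pflip_mem]

lemma pflip_append {i : ℕ} {u : List ℕ} (h : i ≤ u.length) (C : List ℕ) :
    pflip i (u ++ C) = pflip i u ++ C := by
  unfold pflip
  rw [List.take_append_of_le_length h, List.drop_append_of_le_length h, List.append_assoc]

lemma reachIn_append (C : List ℕ) : ∀ {m : ℕ} {u v : List ℕ}, ReachIn m u v →
    ReachIn m (u ++ C) (v ++ C) := by
  intro m
  induction m with
  | zero => intro u v h; exact congrArg (· ++ C) h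
  | succ m ih =>
    rintro u v ⟨w, ⟨i, hi1, hi2, rfl⟩, hr⟩
    exact ⟨pflip i u ++ C, ⟨i, hi1, by rw [List.length_append]; omega,
      (pflip_append hi2 C).symm⟩, ih hr⟩

lemma grouped_uniform {l : List ℕ} (h : ∀ x ∈ l, ∀ y ∈ l, x = y) : Grouped l := by
  intro i j _ _ _ _
  exact h _ (l.get_mem _) _ (l.get_mem _)

lemma grouped_append_uniform {r C : List ℕ} {c : ℕ}
    (hC : ∀ x ∈ C, x = c) (hc : c ∉ r) (hr : Grouped r) : Grouped (r ++ C) := by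
  intro i j l hij hjl heq
  simp only [List.get_eq_getElem] at heq ⊢
  rw [Fin.lt_def] at hij hjl
  by_cases hl : (l : ℕ) < r.length
  · have hj : (j : ℕ) < r.length := lt_trans hjl hl
    have hi : (i : ℕ) < r.length := lt_trans hij hj
    have e_i : (r ++ C)[(i : ℕ)] = r[(i : ℕ)] := List.getElem_append_left hi
    have e_j : (r ++ C)[(j : ℕ)] = r[(j : ℕ)] := List.getElem_append_left hj
    have e_l : (r ++ C)[(l : ℕ)] = r[(l : ℕ)] := List.getElem_append_left hl
    have key := hr ⟨i, hi⟩ ⟨j, hj⟩ ⟨l, hl⟩ (Fin.mk_lt_mk.2 hij) (Fin.mk_lt_mk.2 hjl)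
      (by simp only [List.get_eq_getElem]; exact (e_i.symm.trans heq).trans e_l)
    simp only [List.get_eq_getElem] at key
    exact (e_j.trans key).trans e_i.symm
  · push_neg at hl
    have hlv : (r ++ C)[(l : ℕ)] = c := by
      rw [List.getElem_append_right hl]
      exact hC _ (List.getElem_mem _)
    by_cases hi : (i : ℕ) < r.length
    · exfalso
      rw [List.getElem_append_left hi, hlv] at heq
      exact hc (heq ▸ List.getElem_mem _)
    · push_neg at hi
      have hj : r.length ≤ (j : ℕ) := le_trans hi (le_of_lt hij)
      have hjv : (r ++ C)[(j : ℕ)] = c := by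
        rw [List.getElem_append_right hj]
        exact hC _ (List.getElem_mem _)
      have hiv : (r ++ C)[(i : ℕ)] = c := by
        rw [List.getElem_append_right hi]
        exact hC _ (List.getElem_mem _)
      rw [hjv, hiv]

lemma dropWhile_head?_not (p : ℕ → Bool) : ∀ (l : List ℕ) (x : ℕ),
    (l.dropWhile p).head? = some x → p x = false := by
  intro l
  induction l with
  | nil => simp
  | cons a l ih =>
    intro x hx
    by_cases hp : p a
    · rw [List.dropWhile_cons_of_pos hp] at hx; exact ih x hx
    · rw [List.dropWhile_cons_of_neg hp] at hx
      simp only [List.head?_cons, Option.some.injEq] at hx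
      subst hx
      simpa using hp


lemma main : ∀ (N : ℕ) (s : List ℕ), nb s ≤ N → (∃ x ∈ s, ∃ y ∈ s, x ≠ y) →
    ∃ m, m + 2 ≤ nb s ∧ ∃ t, Grouped t ∧ ReachIn m s t := by
  intro N
  induction N with
  | zero =>
    intro s hN h2
    have := two_le_nb h2
    omega
  | succ N ih =>
    intro s hN h2
    obtain ⟨x, hx, y, hy, hxy⟩ := h2
    have hne : s ≠ [] := by rintro rfl; simp at hx
    obtain ⟨a, s', hs'⟩ := List.exists_cons_of_ne_nil hne
    set A := s.takeWhile (· == a) with hAdef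
    set R := s.dropWhile (· == a) with hRdef
    have hAR : A ++ R = s := List.takeWhile_append_dropWhile
    have hA : ∀ z ∈ A, z = a := fun z hz => by
      simpa using List.mem_takeWhile_imp hz
    have hAne : A ≠ [] := by
      rw [hAdef, hs', List.takeWhile_cons_of_pos (by simp)]
      simp
    have hRa : ∀ z, R.head? = some z → z ≠ a := by
      intro z hz hza
      have := dropWhile_head?_not (· == a) s z hz
      rw [hza] at this; simp at this
    by_cases haR : a ∈ R
    · -- merge case
      set X := R.takeWhile (· != a) with hXdef
      set D := R.dropWhile (· != a) with hDdef
      have hXD : X ++ D = R := List.takeWhile_append_dropWhile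
      have hX : ∀ z ∈ X, z ≠ a := fun z hz => by
        simpa using List.mem_takeWhile_imp hz
      have hDne : D ≠ [] := by
        intro h0
        rw [h0, List.append_nil] at hXD
        exact hX a (hXD ▸ haR) rfl
      obtain ⟨d, Y, hD⟩ := List.exists_cons_of_ne_nil hDne
      have hd : d = a := by
        have h1 : D.head? = some d := by rw [hD]; rfl
        have h2 := dropWhile_head?_not (· != a) R d (hDdef ▸ h1)
        simpa using h2
      rw [hd] at hD
      have hRne : R ≠ [] := fun h0 => by rw [h0] at haR; exact absurd haR (by simp)
      obtain ⟨c, R', hR⟩ := List.exists_cons_of_ne_nil hRne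
      have hca : c ≠ a := hRa c (by rw [hR]; rfl)
      have hXne : X ≠ [] := by
        rw [hXdef, hR, List.takeWhile_cons_of_pos (by simp [hca])]
        simp
      obtain ⟨x0, X', hXc⟩ := List.exists_cons_of_ne_nil hXne
      have hx0 : x0 ≠ a := hX x0 (by rw [hXc]; simp)
      have hs2 : s = (A ++ X) ++ a :: Y := by
        rw [← hAR, ← hXD, hD, List.append_assoc]
      set t := (A ++ X).reverse ++ a :: Y with htdef
      have hpf : t = pflip (A ++ X).length s := by
        rw [hs2]; unfold pflip
        rw [List.take_left, List.drop_left]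
      have hstep : FlipStep s t := by
        refine ⟨(A ++ X).length, ?_, ?_, hpf⟩
        · have := List.length_pos_iff.mpr hAne
          rw [List.length_append]; omega
        · rw [hs2]
          simp only [List.length_append, List.length_cons]
          omega
      have hArne : A.reverse ≠ [] := by simpa using hAne
      obtain ⟨a2, W, hAr⟩ := List.exists_cons_of_ne_nil hArne
      have ha2 : a2 = a := hA a2 (by rw [← List.mem_reverse, hAr]; simp)
      rw [ha2] at hAr
      have hW : ∀ z ∈ W, z = a := fun z hz =>
        hA z (by rw [← List.mem_reverse, hAr]; simp [hz])
      have ht3 : t = X.reverse ++ a :: (W ++ a :: Y) := by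
        rw [htdef, List.reverse_append, hAr]
        simp
      have e1 : nb s = nb (X ++ a :: Y) + 1 := by
        rw [hs2, List.append_assoc, nb_unif A a _ hA hAne, nb_cons]
        have hh : (X ++ a :: Y).head? = some x0 := by rw [hXc]; rfl
        rw [hh, if_neg (by simp [hx0])]
      have e2 : nb (X ++ a :: Y) + 1 = nb (X ++ [a]) + nb (a :: Y) := nb_split X a Y
      have e3 : nb (X ++ [a]) = nb X + 1 := by
        have h1 : nb (X.reverse.reverse ++ [a]) = nb (a :: X.reverse) :=
          nb_rev_concat X.reverse a
        rw [List.reverse_reverse] at h1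
        rw [h1, nb_cons, nb_reverse]
        have hXrne : X.reverse ≠ [] := by simpa using hXne
        obtain ⟨z, Z, hz⟩ := List.exists_cons_of_ne_nil hXrne
        have hza : z ≠ a := hX z (by rw [← List.mem_reverse, hz]; simp)
        rw [hz]
        simp [hza]
      have e4 : nb t + 1 = nb (X.reverse ++ [a]) + nb (a :: (W ++ a :: Y)) := by
        rw [ht3]; exact nb_split _ _ _
      have e5 : nb (X.reverse ++ [a]) = nb X + 1 := by
        rw [nb_rev_concat X a, nb_cons, hXc]
        simp [hx0]
      have e6 : nb (a :: (W ++ a :: Y)) = nb (a :: Y) := by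
        have h1 : nb ((a :: W) ++ (a :: Y)) = nb (a :: a :: Y) := by
          refine nb_unif (a :: W) a (a :: Y) ?_ (by simp)
          intro z hz
          rcases List.mem_cons.mp hz with rfl | h
          · rfl
          · exact hW z h
        have h2 : (a :: W) ++ (a :: Y) = a :: (W ++ a :: Y) := by simp
        rw [← h2, h1, nb_cons]
        simp
      have hts : nb t + 1 = nb s := by omega
      have hmem : ∀ z, z ∈ t ↔ z ∈ s := by
        intro z; rw [hpf]; exact pflip_mem _ _ _
      have hNt : nb t ≤ N := by omega
      obtain ⟨m, hm, u, hu, hru⟩ := ih t hNt ⟨x, (hmem x).2 hx, y, (hmem y).2 hy, hxy⟩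
      exact ⟨m + 1, by omega, u, hu, t, hstep, hru⟩
    · -- a not in R
      by_cases hRnil : R = []
      · exfalso
        rw [hRnil, List.append_nil] at hAR
        rw [← hAR] at hx hy
        exact hxy ((hA x hx).trans (hA y hy).symm)
      obtain ⟨c, R', hR⟩ := List.exists_cons_of_ne_nil hRnil
      have hca : c ≠ a := hRa c (by rw [hR]; rfl)
      by_cases hunif : ∀ z ∈ R, z = c
      · have hg : Grouped s := by
          rw [← hAR]
          refine grouped_append_uniform hunif ?_ (grouped_uniform ?_)
          · intro hcA; exact hca (hA c hcA)
          · intro p hp q hq; rw [hA p hp, hA q hq]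
        exact ⟨0, two_le_nb ⟨x, hx, y, hy, hxy⟩, s, hg, rfl⟩
      · push_neg at hunif
        obtain ⟨z, hzR, hzc⟩ := hunif
        have es : nb s = nb R + 1 := by
          rw [← hAR, nb_unif A a R hA hAne, nb_cons, hR]
          simp [hca]
        have hNR : nb R.reverse ≤ N := by rw [nb_reverse]; omega
        have h2R : ∃ p ∈ R.reverse, ∃ q ∈ R.reverse, p ≠ q :=
          ⟨z, by simpa using hzR, c, by rw [List.mem_reverse, hR]; simp, hzc⟩
        obtain ⟨m, hm, u, hu, hru⟩ := ih R.reverse hNR h2R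
        have hlift : ReachIn m (R.reverse ++ A.reverse) (u ++ A.reverse) :=
          reachIn_append _ hru
        have hau : a ∉ u := by
          intro hau
          have := (reachIn_mem hru a).1 hau
          rw [List.mem_reverse] at this
          exact haR this
        have hgu : Grouped (u ++ A.reverse) :=
          grouped_append_uniform (fun p hp => hA p (List.mem_reverse.1 hp)) hau hu
        have hsrev : s.reverse = R.reverse ++ A.reverse := by
          rw [← hAR, List.reverse_append]
        have hstep : FlipStep s s.reverse := by
          refine ⟨s.length, ?_, le_refl _, ?_⟩
          · have := List.length_pos_iff.mpr hne
            omega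
          · unfold pflip
            rw [List.take_length, List.drop_length, List.append_nil]
        refine ⟨m + 1, ?_, u ++ A.reverse, hgu, s.reverse, hstep, ?_⟩
        · rw [nb_reverse] at hm; omega
        · rw [hsrev]; exact hlift

end GroupingAux

theorem grouping_upper_bound (k n : ℕ) (hk : 2 ≤ k) (s : List ℕ)
    (hlen : s.length = n) (hfull : FullyKary k s) (hnorm : Normalized s) :
    groupDist s ≤ n - 2 := by
  have h0 : (0 : ℕ) ∈ s := (hfull 0).2 (by omega)
  have h1 : (1 : ℕ) ∈ s := (hfull 1).2 (by omega)
  obtain ⟨m, hm, t, ht, hr⟩ := GroupingAux.main (GroupingAux.nb s) s le_rfl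
    ⟨0, h0, 1, h1, by omega⟩
  have hle : groupDist s ≤ m := Nat.sInf_le ⟨t, ht, hr⟩
  have hnb : GroupingAux.nb s = n := by
    rw [GroupingAux.nb_normalized hnorm, hlen]
  omega
end

section
/- For every k ≥ 2, the fully k-ary string s = 1 0 2 0 3 0 … (k−1) 0 (the concatenation, for i = 1, …, k−1, of the two-symbol blocks i 0), which has length n = 2(k−1), has flip grouping distance d_g(s) = n − 2 = 2k − 4. -/
/-! ### auxiliary: adjacent-equal-pair count -/

def ge' : List ℕ → ℕ
  | a :: b :: t => (if a = b then 1 else 0) + ge' (b :: t)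
  | _ => 0

def jn (x y : List ℕ) : ℕ :=
  if x.getLast?.isSome ∧ x.getLast? = y.head? then 1 else 0

@[simp] lemma ge'_nil : ge' [] = 0 := rfl
@[simp] lemma ge'_single (a : ℕ) : ge' [a] = 0 := rfl
lemma ge'_cons_cons (a b : ℕ) (t : List ℕ) :
    ge' (a :: b :: t) = (if a = b then 1 else 0) + ge' (b :: t) := rfl

@[simp] lemma jn_nil_left (y : List ℕ) : jn [] y = 0 := by simp [jn]
@[simp] lemma jn_nil_right (x : List ℕ) : jn x [] = 0 := by
  unfold jn
  split
  · next h => rw [h.2] at h; simp at h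
  · rfl

lemma jn_le_one (x y : List ℕ) : jn x y ≤ 1 := by unfold jn; split <;> simp

lemma jn_singleton_left (a : ℕ) (y : List ℕ) :
    jn [a] y = if y.head? = some a then 1 else 0 := by
  unfold jn; simp [eq_comm]

lemma ge'_append (x y : List ℕ) : ge' (x ++ y) = ge' x + jn x y + ge' y := by
  induction x with
  | nil => simp
  | cons a x ih =>
    cases x with
    | nil =>
      cases y with
      | nil => simp
      | cons b y' =>
        simp only [List.singleton_append, ge'_cons_cons, ge'_single, jn_singleton_left,
          List.head?_cons]
        by_cases hab : a = b <;> simp [hab, eq_comm] <;> omega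
    | cons c x' =>
      have h1 : (a :: c :: x') ++ y = a :: ((c :: x') ++ y) := rfl
      rw [h1, List.cons_append, ge'_cons_cons, ← List.cons_append, ih, ge'_cons_cons]
      have h2 : jn (a :: c :: x') y = jn (c :: x') y := by
        unfold jn
        rw [List.getLast?_cons_cons]
      rw [h2]; ring

lemma ge'_reverse (s : List ℕ) : ge' s.reverse = ge' s := by
  induction s with
  | nil => simp
  | cons a t ih =>
    rw [List.reverse_cons, ge'_append, ih]
    have h1 : ge' (a :: t) = ge' ([a] ++ t) := rfl
    rw [h1, ge'_append]
    have h2 : jn t.reverse [a] = jn [a] t := by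
      unfold jn
      rw [List.getLast?_reverse]
      cases ht : t.head? with
      | none => simp [ht]
      | some b => simp [ht, eq_comm]
    rw [h2]; simp; omega

/-! ### The potential function -/

noncomputable def hc (s : List ℕ) : ℤ := if s.head? = some 0 then 0 else 1
noncomputable def Phi (K : ℕ) (s : List ℕ) : ℤ := 2*K - 2*(ge' s : ℤ) + hc s

lemma hc_le_one (s : List ℕ) : hc s ≤ 1 := by unfold hc; split <;> simp
lemma hc_nonneg (s : List ℕ) : 0 ≤ hc s := by unfold hc; split <;> simp

lemma flipStep_perm {u t : List ℕ} (h : FlipStep u t) : t.Perm u := by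
  obtain ⟨i, _, _, rfl⟩ := h
  have h1 : pflip i u = (u.take i).reverse ++ u.drop i := rfl
  rw [h1]
  exact (((u.take i).reverse_perm).append_right _).trans (by rw [List.take_append_drop])

lemma phi_step (K : ℕ) {u t : List ℕ}
    (h2 : ∀ a, 2 ≤ u.count a → a = 0) (h : FlipStep u t) :
    Phi K u - 1 ≤ Phi K t := by
  obtain ⟨i, hi1, hil, rfl⟩ := h
  set x := u.take i with hx
  set y := u.drop i with hy
  have hxlen : x.length = i := by rw [hx, List.length_take]; omega
  have hxne : x ≠ [] := by
    intro h; rw [h] at hxlen; simp at hxlen; omega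
  have hu : u = x ++ y := (List.take_append_drop i u).symm
  have hgu : ge' u = ge' x + jn x y + ge' y := by rw [hu, ge'_append]
  have hgt : ge' (pflip i u) = ge' x + jn x.reverse y + ge' y := by
    show ge' (x.reverse ++ y) = _
    rw [ge'_append, ge'_reverse]
  have hheadt : (pflip i u).head? = x.getLast? := by
    show (x.reverse ++ y).head? = _
    rw [List.head?_append_of_ne_nil _ (by simpa using hxne), List.head?_reverse]
  have hheadu : u.head? = x.head? := by
    rw [hu, List.head?_append_of_ne_nil _ hxne]
  by_cases hcase : jn x.reverse y ≤ jn x y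
  · unfold Phi
    have e1 := hc_le_one (pflip i u)
    have e2 := hc_nonneg u
    have e3 := hc_le_one u
    have e4 := hc_nonneg (pflip i u)
    rw [hgu, hgt]
    push_cast
    omega
  · have hj1 : jn x.reverse y = 1 := by
      have := jn_le_one x.reverse y
      omega
    have hj0 : jn x y = 0 := by omega
    have hj1' : x.reverse.getLast?.isSome ∧ x.reverse.getLast? = y.head? := by
      by_contra hcon
      unfold jn at hj1
      rw [if_neg hcon] at hj1
      exact absurd hj1 (by simp)
    rw [List.getLast?_reverse] at hj1'
    obtain ⟨a, hxa⟩ : ∃ a, x.head? = some a := by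
      cases hh : x.head? with
      | none => rw [hh] at hj1'; simp at hj1'
      | some a => exact ⟨a, rfl⟩
    have hya : y.head? = some a := by rw [← hj1'.2, hxa]
    have hax : a ∈ x := List.mem_of_mem_head? (by rw [hxa]; rfl)
    have hay : a ∈ y := List.mem_of_mem_head? (by rw [hya]; rfl)
    have ha0 : a = 0 := by
      apply h2
      have hc : u.count a = x.count a + y.count a := by rw [hu, List.count_append]
      have c1 : 0 < x.count a := List.count_pos_iff.mpr hax
      have c2 : 0 < y.count a := List.count_pos_iff.mpr hay
      omega
    have hlast : x.getLast? ≠ some 0 := by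
      intro hl
      unfold jn at hj0
      rw [if_pos ⟨by rw [hl]; rfl, by rw [hl, hya, ha0]⟩] at hj0
      exact absurd hj0 (by simp)
    have hcu : hc u = 0 := by
      unfold hc; rw [hheadu, hxa, ha0]; simp
    have hct : hc (pflip i u) = 1 := by
      unfold hc; rw [hheadt]; simp [hlast]
    unfold Phi
    rw [hgu, hgt, hcu, hct, hj0, hj1]
    push_cast
    omega

/-! ### invariant along reach -/

lemma reachIn_count {m : ℕ} {u t : List ℕ} (h : ReachIn m u t) :
    ∀ a, t.count a = u.count a := by
  induction m generalizing u with
  | zero => cases h; intro a; rfl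
  | succ m ih =>
    obtain ⟨w, hw, hr⟩ := h
    intro a
    rw [ih hr a, (flipStep_perm hw).count_eq]

lemma phi_reach (K : ℕ) {m : ℕ} {u t : List ℕ} (h : ReachIn m u t)
    (h2 : ∀ a, 2 ≤ u.count a → a = 0) :
    Phi K u ≤ m + Phi K t := by
  induction m generalizing u with
  | zero => cases h; simp
  | succ m ih =>
    obtain ⟨w, hw, hr⟩ := h
    have h2w : ∀ a, 2 ≤ w.count a → a = 0 := by
      intro a ha
      exact h2 a (by rw [← (flipStep_perm hw).count_eq]; exact ha)
    have e1 := phi_step K h2 hw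
    have e2 := ih hr h2w
    push_cast
    omega

/-! ### grouped lemmas -/

lemma grouped_tail_s6 {b : ℕ} {u : List ℕ} (h : Grouped (b :: u)) : Grouped u := by
  intro i j l hij hjl he
  have := h ⟨i.1+1, by simpa using i.2⟩ ⟨j.1+1, by simpa using j.2⟩ ⟨l.1+1, by simpa using l.2⟩
    (by simp only [Fin.mk_lt_mk]; exact Nat.succ_lt_succ hij)
    (by simp only [Fin.mk_lt_mk]; exact Nat.succ_lt_succ hjl)
  simp only [List.get_cons_succ] at this
  exact this he

lemma grouped_not_mem {a c : ℕ} {w : List ℕ} (h : Grouped (a :: c :: w)) (hac : a ≠ c) :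
    a ∉ w := by
  intro hmem
  obtain ⟨l, hl⟩ := List.get_of_mem hmem
  have key := h ⟨0, by simp⟩ ⟨1, by simp⟩ ⟨l.1+2, by simp⟩
    (by simp [Fin.lt_def]) (by simp [Fin.lt_def])
  have g0 : (a :: c :: w).get ⟨0, by simp⟩ = a := rfl
  have g1 : (a :: c :: w).get ⟨1, by simp⟩ = c := rfl
  have g2 : (a :: c :: w).get ⟨l.1+2, by simp⟩ = w.get l := by
    simp [List.get_cons_succ]
  rw [g0, g1, g2, hl] at key
  exact hac (key rfl).symm

lemma ge'_cons_le (b : ℕ) (u : List ℕ) : ge' u ≤ ge' (b :: u) := by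
  cases u with
  | nil => simp
  | cons c w => rw [ge'_cons_cons]; omega

lemma count_le_ge' {t : List ℕ} (h : Grouped t) (a : ℕ) : t.count a ≤ ge' t + 1 := by
  induction t with
  | nil => simp
  | cons b u ih =>
    have hg : Grouped u := grouped_tail_s6 h
    by_cases hab : a = b
    · cases u with
      | nil => simp [List.count_cons, hab]
      | cons c w =>
        by_cases hca : c = b
        · rw [ge'_cons_cons]
          have e := ih hg
          have h1 : (b :: c :: w).count a = (c :: w).count a + 1 := by
            rw [hab]; exact List.count_cons_self
          have h2 : (if b = c then 1 else 0) = 1 := by simp [hca]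
          omega
        · have hbc : b ≠ c := fun he => hca he.symm
          have hnm : a ∉ w := by
            rw [hab]; exact grouped_not_mem h hbc
          have h1 : (c :: w).count a = 0 := by
            rw [List.count_cons_of_ne (by rw [hab]; exact hca), List.count_eq_zero.mpr hnm]
          have h2 : (b :: c :: w).count a = 1 := by
            rw [hab, List.count_cons_self, ← hab, h1]
          omega
    · rw [List.count_cons_of_ne (Ne.symm hab)]
      have e1 := ih hg
      have e2 := ge'_cons_le b u
      omega

lemma grouped_of_sorted_ge {t : List ℕ} (h : List.Pairwise (fun a b => b ≤ a) t) :
    Grouped t := by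
  intro i j l hij hjl he
  have h1 := h.rel_get_of_lt hij
  have h2 := h.rel_get_of_lt hjl
  omega

/-! ### the specific string -/

def PS (n : ℕ) : List ℕ := ((List.range n).map (fun i => [i+1, 0])).flatten

def blocks (s r : ℕ) : List ℕ := ((List.range' s r).map (fun i => [i+1, 0])).flatten

lemma PS_succ (n : ℕ) : PS (n+1) = PS n ++ [n+1, 0] := by
  simp [PS, List.range_succ]

lemma PS_length (n : ℕ) : (PS n).length = 2*n := by
  induction n with
  | zero => rfl
  | succ n ih => rw [PS_succ, List.length_append, ih]; simp; omega

lemma PS_count0 (n : ℕ) : (PS n).count 0 = n := by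
  induction n with
  | zero => rfl
  | succ n ih =>
    rw [PS_succ, List.count_append, ih]
    simp

lemma mem_PS {a n : ℕ} (h : a ∈ PS n) : a ≤ n := by
  induction n with
  | zero => simp [PS] at h
  | succ n ih =>
    rw [PS_succ, List.mem_append] at h
    rcases h with h | h
    · exact le_trans (ih h) (Nat.le_succ n)
    · simp at h; omega

lemma PS_count_le {a n : ℕ} (ha : a ≠ 0) : (PS n).count a ≤ 1 := by
  induction n with
  | zero => simp [PS]
  | succ n ih =>
    rw [PS_succ, List.count_append]
    by_cases han : a = n+1
    · have h0 : (PS n).count a = 0 := by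
        rw [List.count_eq_zero]
        intro hmem
        have := mem_PS hmem
        omega
      have h1 : ([n+1, 0] : List ℕ).count a = 1 := by
        subst han
        simp [List.count_cons, ha]
      omega
    · have h1 : ([n+1, 0] : List ℕ).count a = 0 := by
        simp [List.count_cons, ha, han]
        omega
      omega

lemma PS_getLast (n : ℕ) : (PS (n+1)).getLast? = some 0 := by
  rw [PS_succ, List.getLast?_append_of_ne_nil _ (by simp)]
  rfl

lemma PS_ge' (n : ℕ) : ge' (PS n) = 0 := by
  induction n with
  | zero => rfl
  | succ n ih =>
    rw [PS_succ, ge'_append, ih]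
    have h1 : ge' [n+1, 0] = 0 := by
      rw [ge'_cons_cons]
      simp
    have h2 : jn (PS n) [n+1, 0] = 0 := by
      cases n with
      | zero => simp [PS]
      | succ m =>
        unfold jn
        rw [PS_getLast m]
        simp
    omega

lemma PS_head {n : ℕ} (h : 1 ≤ n) : (PS n).head? = some 1 := by
  induction n with
  | zero => omega
  | succ n ih =>
    cases n with
    | zero => rfl
    | succ m =>
      rw [PS_succ, List.head?_append_of_ne_nil]
      · exact ih (by omega)
      · intro hc
        have := PS_length (m+1)
        rw [hc] at this
        simp at this

/-! ### upper bound construction -/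

lemma blocks_length (s r : ℕ) : (blocks s r).length = 2*r := by
  induction r generalizing s with
  | zero => rfl
  | succ r ih =>
    rw [blocks, List.range'_succ]
    simp only [List.map_cons, List.flatten_cons]
    rw [List.length_append]
    have := ih (s+1)
    rw [blocks] at this
    rw [this]
    simp; omega

lemma blocks_succ (s r : ℕ) : blocks s (r+1) = [s+1, 0] ++ blocks (s+1) r := by
  rw [blocks, List.range'_succ]
  simp [blocks]

def Ast (j r : ℕ) : List ℕ :=
  (List.range' 1 (j+1)).reverse ++ List.replicate (j+1) 0 ++ blocks (j+1) r

def Bst (j r : ℕ) : List ℕ :=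
  List.replicate j 0 ++ List.range' 1 j ++ blocks j r

lemma pflip_append_s6 {i : ℕ} (X Y : List ℕ) (h : X.length = i) :
    pflip i (X ++ Y) = X.reverse ++ Y := by
  unfold pflip
  rw [List.take_left' h, List.drop_left' h]

lemma Ast_length (j r : ℕ) : (Ast j r).length = 2*j + 2 + 2*r := by
  rw [Ast]
  simp [blocks_length]
  omega

lemma Bst_length (j r : ℕ) : (Bst j r).length = 2*j + 2*r := by
  rw [Bst]
  simp [blocks_length]
  omega

lemma Ast_zero {n : ℕ} (h : 1 ≤ n) : Ast 0 (n-1) = PS n := by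
  obtain ⟨m, rfl⟩ : ∃ m, n = m + 1 := ⟨n-1, by omega⟩
  rw [Ast, PS, blocks]
  have hr : List.range (m+1) = 0 :: List.range' 1 m := by
    rw [List.range_eq_range', List.range'_succ]
  rw [hr]
  simp

lemma flip1 (j r : ℕ) : pflip (2*j+2) (Ast j (r+1)) = Bst (j+1) (r+1) := by
  have h : ((List.range' 1 (j+1)).reverse ++ List.replicate (j+1) 0).length = 2*j+2 := by
    simp; omega
  rw [Ast, List.append_assoc, ← List.append_assoc, pflip_append_s6 _ _ h, Bst]
  simp

lemma flip2 (j r : ℕ) : pflip (2*j+3) (Bst (j+1) (r+1)) = Ast (j+1) r := by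
  have hregroup : Bst (j+1) (r+1) =
      (List.replicate (j+1) 0 ++ List.range' 1 (j+1) ++ [j+2]) ++ (0 :: blocks (j+2) r) := by
    rw [Bst, blocks_succ]
    simp
  have h : (List.replicate (j+1) 0 ++ List.range' 1 (j+1) ++ [j+2]).length = 2*j+3 := by
    simp; omega
  rw [hregroup, pflip_append_s6 _ _ h, Ast]
  have h1 : List.range' 1 (j+1+1) = List.range' 1 (j+1) ++ [j+2] := by
    rw [List.range'_concat]
    congr 1
    simp
    omega
  have h2 : List.replicate (j+1+1) (0:ℕ) = List.replicate (j+1) 0 ++ [0] := by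
    rw [List.replicate_succ']
  rw [h1, h2]
  simp

lemma reach_snoc {m : ℕ} {s t t' : List ℕ} (h : ReachIn m s t) (h' : FlipStep t t') :
    ReachIn (m+1) s t' := by
  induction m generalizing s with
  | zero => cases h; exact ⟨t', h', rfl⟩
  | succ m ih =>
    obtain ⟨u, hu, hr⟩ := h
    exact ⟨u, hu, ih hr⟩

lemma upper {n : ℕ} (hn : 1 ≤ n) : ∀ j, j ≤ n-1 → ReachIn (2*j) (PS n) (Ast j (n-1-j)) := by
  intro j
  induction j with
  | zero =>
    intro _
    show PS n = Ast 0 (n-1)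
    exact (Ast_zero hn).symm
  | succ j ih =>
    intro hj
    have hj' : j ≤ n - 1 := by omega
    have ihr := ih hj'
    obtain ⟨r, hr⟩ : ∃ r, n - 1 - j = r + 1 := ⟨n-2-j, by omega⟩
    rw [hr] at ihr
    have step1 : FlipStep (Ast j (r+1)) (Bst (j+1) (r+1)) := by
      refine ⟨2*j+2, by omega, ?_, (flip1 j r).symm⟩
      rw [Ast_length]
      omega
    have step2 : FlipStep (Bst (j+1) (r+1)) (Ast (j+1) r) := by
      refine ⟨2*j+3, by omega, ?_, (flip2 j r).symm⟩
      rw [Bst_length]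
      omega
    have : ReachIn (2*j+2) (PS n) (Ast (j+1) r) :=
      reach_snoc (reach_snoc ihr step1) step2
    have hrr : n - 1 - (j+1) = r := by omega
    rw [hrr]
    have h2 : 2*(j+1) = 2*j+2 := by omega
    rw [h2]
    exact this

lemma Ast_final_grouped (n : ℕ) : Grouped (Ast (n-1) 0) := by
  apply grouped_of_sorted_ge
  rw [Ast, blocks]
  simp only [List.range'_zero, List.map_nil, List.flatten_nil, List.append_nil]
  rw [List.pairwise_append]
  refine ⟨?_, ?_, ?_⟩
  · rw [List.pairwise_reverse]
    exact (List.pairwise_lt_range' (s := 1) (n := n-1+1)).imp (fun h => le_of_lt h)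
  · rw [List.pairwise_replicate]
    right; rfl
  · intro a ha b hb
    rw [List.mem_reverse, List.mem_range'] at ha
    rw [List.eq_of_mem_replicate hb]
    omega

theorem grouping_hard_kary_string (k : ℕ) (hk : 2 ≤ k) :
    (((List.range (k-1)).map (fun i => [i+1, 0])).flatten).length = 2*(k-1) ∧
    groupDist (((List.range (k-1)).map (fun i => [i+1, 0])).flatten) = 2*k - 4 := by
  have hn : 1 ≤ k - 1 := by omega
  constructor
  · exact PS_length (k-1)
  · show groupDist (PS (k-1)) = 2*k - 4
    set n := k - 1 with hndef
    have hreach := upper hn (n-1) le_rfl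
    have hgrp := Ast_final_grouped n
    have hmem : (2*k-4) ∈ {m | ∃ t, Grouped t ∧ ReachIn m (PS n) t} := by
      refine ⟨Ast (n-1) 0, hgrp, ?_⟩
      have e1 : n - 1 - (n-1) = 0 := by omega
      rw [e1] at hreach
      have e2 : 2*(n-1) = 2*k-4 := by omega
      rwa [e2] at hreach
    apply le_antisymm
    · exact Nat.sInf_le hmem
    · apply le_csInf ⟨_, hmem⟩
      rintro m ⟨t, ht, hr⟩
      have h2 : ∀ a, 2 ≤ (PS n).count a → a = 0 := by
        intro a ha
        by_contra h0
        have := PS_count_le (n := n) h0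
        omega
      have hphi := phi_reach (n-1) hr h2
      have hcount : t.count 0 = n := by rw [reachIn_count hr 0, PS_count0]
      have hget : n ≤ ge' t + 1 := by rw [← hcount]; exact count_le_ge' ht 0
      have hPhiS : Phi (n-1) (PS n) = 2*((n:ℤ)-1) + 1 := by
        unfold Phi hc
        rw [PS_ge' n, PS_head hn]
        have : ((n:ℕ) - 1 : ℕ) = ((n:ℤ) - 1 : ℤ) := by push_cast; omega
        norm_num [this]
      have hPhit : Phi (n-1) t ≤ 1 := by
        unfold Phi
        have e1 := hc_le_one t
        have e2 : ((n:ℕ) - 1 : ℕ) = ((n:ℤ) - 1 : ℤ) := by push_cast; omega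
        rw [e2]
        have : (n:ℤ) ≤ (ge' t : ℤ) + 1 := by exact_mod_cast hget
        linarith
      rw [hPhiS] at hphi
      have hm : 2*((n:ℤ)-1) + 1 ≤ (m:ℤ) + 1 := le_trans hphi (by linarith)
      omega
end

section
/- Every normalized fully ternary string s of length n whose last symbol is 2, other than the string 0212, has flip sorting distance d_s(s) ≤ n − 2. -/
namespace Work

/-- generic prefix reverse -/
def pf {α : Type*} (i : ℕ) (l : List α) : List α := (l.take i).reverse ++ l.drop i

lemma pflip_eq_pf (i : ℕ) (s : List ℕ) : pflip i s = pf i s := rfl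

lemma pf_perm {α : Type*} (i : ℕ) (l : List α) : (pf i l).Perm l := by
  calc (pf i l).Perm (l.take i ++ l.drop i) := by
        exact ((l.take i).reverse_perm.append_right _)
    _ = l := l.take_append_drop i

lemma pf_length {α : Type*} (i : ℕ) (l : List α) : (pf i l).length = l.length :=
  (pf_perm i l).length_eq

lemma pf_append {α : Type*} {i : ℕ} {X Y : List α} (h : X.length = i) :
    pf i (X ++ Y) = X.reverse ++ Y := by
  unfold pf
  rw [List.take_left' h, List.drop_left' h]

lemma pflip_append {i : ℕ} {X Y : List ℕ} (h : X.length = i) :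
    pflip i (X ++ Y) = X.reverse ++ Y := pf_append h

lemma reachIn_perm : ∀ {m s t}, ReachIn m s t → s.Perm t
  | 0, s, t, h => by rw [show s = t from h]
  | (m+1), s, t, ⟨u, ⟨i, _, _, hu⟩, hr⟩ => by
      have : u.Perm s := by rw [hu, pflip_eq_pf]; exact pf_perm i s
      exact (this.symm).trans (reachIn_perm hr)

lemma reachIn_trans : ∀ {a b s u t}, ReachIn a s u → ReachIn b u t → ReachIn (a+b) s t
  | 0, b, s, u, t, h1, h2 => by rwa [show s = u from h1, Nat.zero_add]
  | (a+1), b, s, u, t, ⟨v, hs, hr⟩, h2 => by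
      rw [Nat.add_right_comm]
      exact ⟨v, hs, reachIn_trans hr h2⟩

lemma reachIn_one {s t : List ℕ} (h : FlipStep s t) : ReachIn 1 s t := ⟨t, h, rfl⟩

lemma reachIn_step {s u t : List ℕ} {m : ℕ} (h : FlipStep s u) (h2 : ReachIn m u t) :
    ReachIn (m+1) s t := by
  have := reachIn_trans (reachIn_one h) h2
  rwa [Nat.add_comm] at this

/-- `Good b s`: s can be transformed to a sorted string in at most `b` flips. -/
def Good (b : ℕ) (s : List ℕ) : Prop :=
  ∃ m t, m ≤ b ∧ ReachIn m s t ∧ List.Pairwise (· ≤ ·) t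

lemma good_of_sorted {s : List ℕ} (h : List.Pairwise (· ≤ ·) s) (b : ℕ) : Good b s :=
  ⟨0, s, Nat.zero_le b, rfl, h⟩

lemma good_mono {s : List ℕ} {b b' : ℕ} (h : Good b s) (hb : b ≤ b') : Good b' s := by
  obtain ⟨m, t, hm, hr, hs⟩ := h
  exact ⟨m, t, hm.trans hb, hr, hs⟩

lemma good_step {s u : List ℕ} {b : ℕ} (h : FlipStep s u) (hg : Good b u) : Good (b+1) s := by
  obtain ⟨m, t, hm, hr, hs⟩ := hg
  exact ⟨m+1, t, Nat.succ_le_succ hm, reachIn_step h hr, hs⟩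

lemma good_sortDist {s : List ℕ} {b : ℕ} (h : Good b s) : sortDist s ≤ b := by
  obtain ⟨m, t, hm, hr, hs⟩ := h
  have hperm : t.Perm (s.insertionSort (· ≤ ·)) :=
    ((reachIn_perm hr).symm.trans (List.perm_insertionSort _ s).symm)
  have ht : t = s.insertionSort (· ≤ ·) :=
    hperm.eq_of_pairwise (fun a b _ _ h1 h2 => le_antisymm h1 h2) hs (List.pairwise_insertionSort _ s)
  have : ReachIn m s (s.insertionSort (· ≤ ·)) := ht ▸ hr
  exact le_trans (Nat.sInf_le this) hm

/-- appending a suffix commutes with reaching -/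
lemma reachIn_append : ∀ {m s t} (v : List ℕ), ReachIn m s t → ReachIn m (s ++ v) (t ++ v)
  | 0, s, t, v, h => by rw [show s = t from h]; rfl
  | (m+1), s, t, v, ⟨u, ⟨i, h1, h2, hu⟩, hr⟩ => by
      refine ⟨u ++ v, ⟨i, h1, ?_, ?_⟩, reachIn_append v hr⟩
      · simp only [List.length_append]; omega
      · rw [hu]
        unfold pflip
        rw [List.take_append_of_le_length h2, List.drop_append_of_le_length h2,
          List.append_assoc]

lemma good_append_max {s : List ℕ} {b c : ℕ} (h : Good b s) (hc : ∀ a ∈ s, a ≤ c) :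
    Good b (s ++ [c]) := by
  obtain ⟨m, t, hm, hr, hs⟩ := h
  refine ⟨m, t ++ [c], hm, reachIn_append [c] hr, ?_⟩
  have hperm := reachIn_perm hr
  rw [List.pairwise_append]
  refine ⟨hs, List.pairwise_singleton _ _, ?_⟩
  intro a ha b hb
  rw [List.mem_singleton] at hb
  subst hb
  exact hc a (hperm.mem_iff.mpr ha)


/-- flatten a block decomposition -/
def F (L : List (ℕ × ℕ)) : List ℕ := (L.map fun p => List.replicate p.2 p.1).flatten

lemma F_append (A B : List (ℕ × ℕ)) : F (A ++ B) = F A ++ F B := by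
  unfold F; rw [List.map_append, List.flatten_append]

lemma F_reverse (L : List (ℕ × ℕ)) : F L.reverse = (F L).reverse := by
  unfold F
  rw [List.reverse_flatten, List.map_map, List.map_reverse]
  congr 1
  congr 1
  apply List.map_congr_left
  intro p _
  simp [List.reverse_replicate]

lemma F_take (i : ℕ) (L : List (ℕ × ℕ)) :
    F (L.take i) ++ F (L.drop i) = F L := by
  rw [← F_append, List.take_append_drop]

lemma map_pf {α β : Type*} (f : α → β) (i : ℕ) (l : List α) :
    (pf i l).map f = pf i (l.map f) := by
  unfold pf
  rw [List.map_append, List.map_reverse, List.map_take, List.map_drop]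

lemma length_F_pos {L : List (ℕ × ℕ)} (hL : ∀ p ∈ L, 1 ≤ p.2) (h : L ≠ []) :
    1 ≤ (F L).length := by
  cases L with
  | nil => exact absurd rfl h
  | cons p L' =>
    have hp := hL p (List.mem_cons_self)
    have : F (p :: L') = List.replicate p.2 p.1 ++ F L' := rfl
    rw [this, List.length_append, List.length_replicate]
    omega

lemma F_pf {i : ℕ} (L : List (ℕ × ℕ)) :
    F (pf i L) = pf (F (L.take i)).length (F L) := by
  have h1 : pf i L = (L.take i).reverse ++ L.drop i := rfl
  rw [h1, F_append, F_reverse]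
  have h2 : F L = F (L.take i) ++ F (L.drop i) := (F_take i L).symm
  rw [h2, pf_append rfl]

lemma sorted_F {L : List (ℕ × ℕ)} (h : List.Pairwise (· ≤ ·) (L.map Prod.fst)) :
    List.Pairwise (· ≤ ·) (F L) := by
  induction L with
  | nil => exact List.Pairwise.nil
  | cons p L' ih =>
    have hF : F (p :: L') = List.replicate p.2 p.1 ++ F L' := rfl
    rw [List.map_cons, List.pairwise_cons] at h
    rw [hF, List.pairwise_append]
    refine ⟨?_, ih h.2, ?_⟩
    · rw [List.pairwise_replicate]; right; exact le_refl _
    · intro a ha b hb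
      rw [List.eq_of_mem_replicate ha]
      -- b ∈ F L' means b is the fst of some element of L'
      obtain ⟨blk, hblk, hbin⟩ := List.mem_flatten.mp hb
      obtain ⟨q, hq, rfl⟩ := List.mem_map.mp hblk
      rw [List.eq_of_mem_replicate hbin]
      exact h.1 _ (List.mem_map_of_mem (f := Prod.fst) hq)

lemma block_reach : ∀ {m : ℕ} {L : List (ℕ × ℕ)} {q' : List ℕ},
    (∀ p ∈ L, 1 ≤ p.2) → ReachIn m (L.map Prod.fst) q' →
    ∃ L', ReachIn m (F L) (F L') ∧ L'.map Prod.fst = q' ∧ (∀ p ∈ L', 1 ≤ p.2)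
  | 0, L, q', hL, hr => ⟨L, rfl, (show L.map Prod.fst = q' from hr), hL⟩
  | (m+1), L, q', hL, ⟨u, ⟨i, h1, h2, hu⟩, hr⟩ => by
      rw [List.length_map] at h2
      set L₁ := pf i L with hL₁
      have hmap : L₁.map Prod.fst = u := by
        rw [hL₁, map_pf, hu, pflip_eq_pf]
      have hsz : ∀ p ∈ L₁, 1 ≤ p.2 := fun p hp => hL p ((pf_perm i L).mem_iff.mp hp)
      have hLne : L ≠ [] := by
        intro h; rw [h] at h2; simp at h2; omega
      have htake : L.take i ≠ [] := by
        intro h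
        rw [List.take_eq_nil_iff] at h
        rcases h with h | h
        · omega
        · exact hLne h
      have hstep : FlipStep (F L) (F L₁) := by
        refine ⟨(F (L.take i)).length, ?_, ?_, ?_⟩
        · exact length_F_pos (fun p hp => hL p (List.mem_of_mem_take hp)) htake
        · conv_rhs => rw [← F_take i L]
          rw [List.length_append]; omega
        · rw [hL₁, pflip_eq_pf, ← F_pf]
      obtain ⟨L', hr', hm', hs'⟩ := block_reach hsz (hmap ▸ hr)
      exact ⟨L', reachIn_step hstep hr', hm', hs'⟩

lemma good_blocks {b : ℕ} {L : List (ℕ × ℕ)} (hL : ∀ p ∈ L, 1 ≤ p.2)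
    (h : Good b (L.map Prod.fst)) : Good b (F L) := by
  obtain ⟨m, t, hm, hr, hs⟩ := h
  obtain ⟨L', hr', hmap, _⟩ := block_reach hL hr
  exact ⟨m, F L', hm, hr', sorted_F (hmap ▸ hs)⟩

def isSorted : List ℕ → Bool
  | [] => true
  | [_] => true
  | a :: b :: l => a ≤ b && isSorted (b :: l)

lemma isSorted_sorted : ∀ {s : List ℕ}, isSorted s = true → List.Pairwise (· ≤ ·) s
  | [], _ => List.Pairwise.nil
  | [_], _ => List.pairwise_singleton _ _
  | a :: b :: l, h => by
      rw [show isSorted (a :: b :: l) = (decide (a ≤ b) && isSorted (b :: l)) from rfl,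
        Bool.and_eq_true] at h
      have h1 : a ≤ b := of_decide_eq_true h.1
      have h2 := isSorted_sorted h.2
      rw [List.pairwise_cons]
      refine ⟨?_, h2⟩
      intro x hx
      rcases List.mem_cons.mp hx with rfl | hx
      · exact h1
      · rw [List.pairwise_cons] at h2
        exact h1.trans (h2.1 x hx)

def search : ℕ → List ℕ → Bool
  | 0, s => isSorted s
  | (b+1), s => isSorted s || (List.range' 1 s.length).any (fun i => search b (pflip i s))

lemma search_good : ∀ (b : ℕ) (s : List ℕ), search b s = true → Good b s
  | 0, s, h => good_of_sorted (isSorted_sorted h) 0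
  | (b+1), s, h => by
      rw [show search (b+1) s = (isSorted s || (List.range' 1 s.length).any
        (fun i => search b (pflip i s))) from rfl, Bool.or_eq_true] at h
      rcases h with h | h
      · exact good_of_sorted (isSorted_sorted h) _
      · rw [List.any_eq_true] at h
        obtain ⟨i, hi, hs⟩ := h
        rw [List.mem_range'] at hi
        obtain ⟨j, hj1, hj2⟩ := hi
        have h1 : 1 ≤ i := by omega
        have h2 : i ≤ s.length := by omega
        exact good_step ⟨i, h1, h2, rfl⟩ (search_good b _ hs)

lemma base4 : ∀ t : List ℕ, t.length ≤ 4 → (∀ a ∈ t, a < 3) → t ≠ [0,2,1] →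
    Good (t.length - 1) t := by
  intro t hlen h hne
  rcases t with _ | ⟨a, t⟩
  · exact good_of_sorted List.Pairwise.nil _
  have ha : a < 3 := h a (List.mem_cons_self)
  rcases t with _ | ⟨b, t⟩
  · exact good_of_sorted (List.pairwise_singleton _ _) _
  have hb : b < 3 := h b (by simp)
  rcases t with _ | ⟨c, t⟩
  · interval_cases a <;> interval_cases b <;> exact search_good _ _ (by decide)
  have hc : c < 3 := h c (by simp)
  rcases t with _ | ⟨d, t⟩
  · interval_cases a <;> interval_cases b <;> interval_cases c <;>
      first
      | exact absurd rfl hne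
      | exact search_good _ _ (by decide)
  have hd : d < 3 := h d (by simp)
  rcases t with _ | ⟨e, t⟩
  · interval_cases a <;> interval_cases b <;> interval_cases c <;> interval_cases d <;>
      exact search_good _ _ (by decide)
  · have h5 : t.length + 5 ≤ 4 := by simp at hlen; omega
    omega

abbrev R (n a : ℕ) : List ℕ := List.replicate n a

def alt2 (a b : ℕ) : ℕ → List ℕ
  | 0 => []
  | (k+1) => a :: b :: alt2 a b k

@[simp] lemma rep_shift (a n : ℕ) (l : List ℕ) : R n a ++ a :: l = a :: (R n a ++ l) := by
  have h1 : R n a ++ a :: l = (R n a ++ [a]) ++ l := by rw [List.append_assoc]; rfl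
  rw [h1, ← List.replicate_succ' (n := n) (a := a), List.replicate_succ]; rfl

lemma step_flip {X Y : List ℕ} {i : ℕ} (h : X.length = i) (h1 : 1 ≤ i) :
    FlipStep (X ++ Y) (X.reverse ++ Y) :=
  ⟨i, h1, by rw [List.length_append]; omega, (pflip_append h).symm⟩

lemma reach2 {A M Z : List ℕ} (h1 : FlipStep A M) (h2 : FlipStep M Z) : ReachIn 2 A M → True := fun _ => trivial

lemma sorted012 (p q r : ℕ) : List.Pairwise (· ≤ ·) (R p 0 ++ (R q 1 ++ R r 2)) := by
  rw [List.pairwise_append]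
  refine ⟨?_, ?_, ?_⟩
  · rw [List.pairwise_replicate]; right; exact le_refl _
  · rw [List.pairwise_append]
    refine ⟨?_, ?_, ?_⟩
    · rw [List.pairwise_replicate]; right; exact le_refl _
    · rw [List.pairwise_replicate]; right; exact le_refl _
    · intro a ha b hb
      rw [List.eq_of_mem_replicate ha, List.eq_of_mem_replicate hb]; omega
  · intro a ha b hb
    rw [List.eq_of_mem_replicate ha]
    rcases List.mem_append.mp hb with h | h <;> rw [List.eq_of_mem_replicate h] <;> omega

/-! ### Family 1 : `1 :: alt2 2 0 k`, reach sorted in `2k` flips -/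

def B1 (r k' : ℕ) : List ℕ := R r 0 ++ 1 :: (R r 2 ++ alt2 2 0 k')

lemma fam1_step (r k' : ℕ) : ReachIn 2 (B1 r (k'+1)) (B1 (r+1) k') := by
  have f1 : FlipStep (B1 r (k'+1))
      ((R r 0 ++ 1 :: R (r+1) 2).reverse ++ (0 :: alt2 2 0 k')) := by
    have h : B1 r (k'+1) = (R r 0 ++ 1 :: R (r+1) 2) ++ (0 :: alt2 2 0 k') := by
      simp [B1, alt2, List.replicate_succ']
    rw [h]
    exact step_flip (i := 2*r+2) (by simp; try omega) (by omega)
  have f2 : FlipStep ((R r 0 ++ 1 :: R (r+1) 2).reverse ++ (0 :: alt2 2 0 k'))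
      (B1 (r+1) k') := by
    have h : (R r 0 ++ 1 :: R (r+1) 2).reverse ++ (0 :: alt2 2 0 k')
        = (R (r+1) 2 ++ 1 :: R (r+1) 0) ++ alt2 2 0 k' := by
      simp [List.reverse_append, List.replicate_succ']
    have h2 : B1 (r+1) k'
        = (R (r+1) 2 ++ 1 :: R (r+1) 0).reverse ++ alt2 2 0 k' := by
      simp [B1, List.reverse_append, List.replicate_succ']
    rw [h, h2]
    exact step_flip (i := 2*r+3) (by simp; try omega) (by omega)
  exact ⟨_, f1, _, f2, rfl⟩

lemma fam1_ladder (j : ℕ) : ∀ k', ReachIn (2*j) (B1 0 (j + k')) (B1 j k') := by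
  induction j with
  | zero => intro k'; rw [Nat.zero_add]; rfl
  | succ j ih =>
    intro k'
    have h1 := ih (k'+1)
    have h2 := fam1_step j k'
    have := reachIn_trans (by rw [show j + (k'+1) = (j+1) + k' by omega] at h1; exact h1) h2
    rw [show 2*j+2 = 2*(j+1) by omega] at this
    exact this

lemma fam1 (k : ℕ) : Good (2*k) (1 :: alt2 2 0 k) := by
  have h := fam1_ladder k 0
  rw [show k + 0 = k from rfl] at h
  have hB : B1 0 k = 1 :: alt2 2 0 k := by simp [B1]
  rw [hB] at h
  refine ⟨2*k, B1 k 0, le_refl _, h, ?_⟩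
  have : B1 k 0 = R k 0 ++ (R 1 1 ++ R k 2) := by simp [B1, alt2, List.replicate_succ]
  rw [this]
  exact sorted012 k 1 k

/-! ### Family 2 : `1 :: 0 :: alt2 2 0 k`, sorted in `2k+1` flips -/

def B2 (r k' : ℕ) : List ℕ := R (r+1) 0 ++ 1 :: (R r 2 ++ alt2 2 0 k')

lemma fam2_step (r k' : ℕ) : ReachIn 2 (B2 r (k'+1)) (B2 (r+1) k') := by
  have f1 : FlipStep (B2 r (k'+1))
      ((R (r+1) 0 ++ 1 :: R (r+1) 2).reverse ++ (0 :: alt2 2 0 k')) := by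
    have h : B2 r (k'+1) = (R (r+1) 0 ++ 1 :: R (r+1) 2) ++ (0 :: alt2 2 0 k') := by
      simp [B2, alt2, List.replicate_succ']
    rw [h]
    exact step_flip (i := 2*r+3) (by simp; try omega) (by omega)
  have f2 : FlipStep ((R (r+1) 0 ++ 1 :: R (r+1) 2).reverse ++ (0 :: alt2 2 0 k'))
      (B2 (r+1) k') := by
    have h : (R (r+1) 0 ++ 1 :: R (r+1) 2).reverse ++ (0 :: alt2 2 0 k')
        = (R (r+1) 2 ++ 1 :: R (r+2) 0) ++ alt2 2 0 k' := by
      simp [List.reverse_append, List.replicate_succ']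
    have h2 : B2 (r+1) k'
        = (R (r+1) 2 ++ 1 :: R (r+2) 0).reverse ++ alt2 2 0 k' := by
      simp [B2, List.reverse_append, List.replicate_succ']
    rw [h, h2]
    exact step_flip (i := 2*r+4) (by simp; try omega) (by omega)
  exact ⟨_, f1, _, f2, rfl⟩

lemma fam2_ladder (j : ℕ) : ∀ k', ReachIn (2*j) (B2 0 (j + k')) (B2 j k') := by
  induction j with
  | zero => intro k'; rw [Nat.zero_add]; rfl
  | succ j ih =>
    intro k'
    have h1 := ih (k'+1)
    rw [show j + (k'+1) = (j+1) + k' by omega] at h1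
    have := reachIn_trans h1 (fam2_step j k')
    rw [show 2*j+2 = 2*(j+1) by omega] at this
    exact this

lemma fam2 (k : ℕ) : Good (2*k+1) (1 :: 0 :: alt2 2 0 k) := by
  have f0 : FlipStep (1 :: 0 :: alt2 2 0 k) (B2 0 k) := by
    have h : (1 :: 0 :: alt2 2 0 k) = [1,0] ++ alt2 2 0 k := rfl
    have h2 : B2 0 k = [1,0].reverse ++ alt2 2 0 k := by simp [B2]
    rw [h, h2]
    exact step_flip (i := 2) (by simp) (by omega)
  have h := fam2_ladder k 0
  rw [show k + 0 = k from rfl] at h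
  refine ⟨2*k+1, B2 k 0, le_refl _, reachIn_step f0 h, ?_⟩
  have : B2 k 0 = R (k+1) 0 ++ (R 1 1 ++ R k 2) := by simp [B2, alt2, List.replicate_succ]
  rw [this]
  exact sorted012 (k+1) 1 k

/-! ### Family 3 : `0 :: alt2 2 1 (K+2)`, sorted in `2K+4` flips -/

def O3 (r k' : ℕ) : List ℕ := R r 1 ++ 0 :: (R (r+1) 2 ++ 1 :: alt2 2 1 k')

lemma fam3_step (r k' : ℕ) : ReachIn 2 (O3 r (k'+1)) (O3 (r+1) k') := by
  have f1 : FlipStep (O3 r (k'+1))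
      ((R r 1 ++ 0 :: R (r+1) 2).reverse ++ (1 :: alt2 2 1 (k'+1))) := by
    have h : O3 r (k'+1) = (R r 1 ++ 0 :: R (r+1) 2) ++ (1 :: alt2 2 1 (k'+1)) := by
      simp [O3]
    rw [h]
    exact step_flip (i := 2*r+2) (by simp; try omega) (by omega)
  have f2 : FlipStep ((R r 1 ++ 0 :: R (r+1) 2).reverse ++ (1 :: alt2 2 1 (k'+1)))
      (O3 (r+1) k') := by
    have h : (R r 1 ++ 0 :: R (r+1) 2).reverse ++ (1 :: alt2 2 1 (k'+1))
        = (R (r+1) 2 ++ 0 :: R (r+1) 1) ++ (2 :: 1 :: alt2 2 1 k') := by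
      simp [List.reverse_append, List.replicate_succ', alt2]
    have h2 : O3 (r+1) k'
        = (R (r+1) 2 ++ 0 :: R (r+1) 1).reverse ++ (2 :: 1 :: alt2 2 1 k') := by
      simp [O3, List.reverse_append, List.replicate_succ']
    rw [h, h2]
    exact step_flip (i := 2*r+3) (by simp; try omega) (by omega)
  exact ⟨_, f1, _, f2, rfl⟩

lemma fam3_ladder (j : ℕ) : ∀ k', ReachIn (2*j) (O3 0 (j + k')) (O3 j k') := by
  induction j with
  | zero => intro k'; rw [Nat.zero_add]; rfl
  | succ j ih =>
    intro k'
    have h1 := ih (k'+1)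
    rw [show j + (k'+1) = (j+1) + k' by omega] at h1
    have := reachIn_trans h1 (fam3_step j k')
    rw [show 2*j+2 = 2*(j+1) by omega] at this
    exact this

lemma fam3 (K : ℕ) : Good (2*K+4) (0 :: alt2 2 1 (K+2)) := by
  have hs : (0 :: alt2 2 1 (K+2)) = O3 0 (K+1) := by simp [O3, alt2]
  have hlad := fam3_ladder K 1
  -- E := 2^{K+1} 0 1^{K+1} 2 1
  have fE : FlipStep (O3 K 1) (R (K+1) 2 ++ 0 :: (R (K+1) 1 ++ [2,1])) := by
    have h : O3 K 1 = (R K 1 ++ 0 :: R (K+1) 2) ++ (1 :: alt2 2 1 1) := by simp [O3]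
    have h2 : R (K+1) 2 ++ 0 :: (R (K+1) 1 ++ [2,1])
        = (R K 1 ++ 0 :: R (K+1) 2).reverse ++ (1 :: alt2 2 1 1) := by
      simp [List.reverse_append, List.replicate_succ', alt2]
    rw [h, h2]
    exact step_flip (i := 2*K+2) (by simp; try omega) (by omega)
  have f1 : FlipStep (R (K+1) 2 ++ 0 :: (R (K+1) 1 ++ [2,1]))
      (1 :: 2 :: (R (K+1) 1 ++ 0 :: R (K+1) 2)) := by
    have h : R (K+1) 2 ++ 0 :: (R (K+1) 1 ++ [2,1])
        = (R (K+1) 2 ++ 0 :: (R (K+1) 1 ++ [2,1])) ++ [] := by simp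
    have h2 : 1 :: 2 :: (R (K+1) 1 ++ 0 :: R (K+1) 2)
        = (R (K+1) 2 ++ 0 :: (R (K+1) 1 ++ [2,1])).reverse ++ [] := by
      simp [List.reverse_append]
    rw [h, h2]
    exact step_flip (i := 2*K+5) (by simp; try omega) (by omega)
  have f2 : FlipStep (1 :: 2 :: (R (K+1) 1 ++ 0 :: R (K+1) 2))
      (2 :: 1 :: (R (K+1) 1 ++ 0 :: R (K+1) 2)) := by
    have h : (1 :: 2 :: (R (K+1) 1 ++ 0 :: R (K+1) 2))
        = [1,2] ++ (R (K+1) 1 ++ 0 :: R (K+1) 2) := rfl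
    have h2 : (2 :: 1 :: (R (K+1) 1 ++ 0 :: R (K+1) 2))
        = [1,2].reverse ++ (R (K+1) 1 ++ 0 :: R (K+1) 2) := rfl
    rw [h, h2]
    exact step_flip (i := 2) (by simp) (by omega)
  have f3 : FlipStep (2 :: 1 :: (R (K+1) 1 ++ 0 :: R (K+1) 2))
      (0 :: (R (K+2) 1 ++ R (K+2) 2)) := by
    have h : (2 :: 1 :: (R (K+1) 1 ++ 0 :: R (K+1) 2))
        = (2 :: 1 :: R (K+1) 1 ++ [0]) ++ R (K+1) 2 := by
      simp [List.append_assoc]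
    have h2 : (0 :: (R (K+2) 1 ++ R (K+2) 2))
        = (2 :: 1 :: R (K+1) 1 ++ [0]).reverse ++ R (K+1) 2 := by
      simp [List.reverse_append, List.replicate_succ', List.replicate_succ]
    rw [h, h2]
    exact step_flip (i := K+4) (by simp; try omega) (by omega)
  have hreach : ReachIn (2*K+4) (0 :: alt2 2 1 (K+2)) (0 :: (R (K+2) 1 ++ R (K+2) 2)) := by
    rw [hs]
    have tail4 : ReachIn 4 (O3 K 1) (0 :: (R (K+2) 1 ++ R (K+2) 2)) :=
      reachIn_step fE (reachIn_step f1 (reachIn_step f2 (reachIn_one f3)))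
    exact reachIn_trans hlad tail4
  refine ⟨2*K+4, _, le_refl _, hreach, ?_⟩
  have : (0 :: (R (K+2) 1 ++ R (K+2) 2)) = R 1 0 ++ (R (K+2) 1 ++ R (K+2) 2) := rfl
  rw [this]
  exact sorted012 1 (K+2) (K+2)

/-! ### Family 4 : `0 :: 1 :: alt2 2 1 (k+1)`, sorted in `2k+3` flips -/

def E4 (r k' : ℕ) : List ℕ := R r 2 ++ 0 :: (R (r+1) 1 ++ alt2 2 1 k')

lemma fam4_step (r k' : ℕ) : ReachIn 2 (E4 r (k'+1)) (E4 (r+1) k') := by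
  have f1 : FlipStep (E4 r (k'+1))
      ((R r 2 ++ 0 :: R (r+1) 1).reverse ++ (2 :: 1 :: alt2 2 1 k')) := by
    have h : E4 r (k'+1) = (R r 2 ++ 0 :: R (r+1) 1) ++ (2 :: 1 :: alt2 2 1 k') := by
      simp [E4, alt2]
    rw [h]
    exact step_flip (i := 2*r+2) (by simp; try omega) (by omega)
  have f2 : FlipStep ((R r 2 ++ 0 :: R (r+1) 1).reverse ++ (2 :: 1 :: alt2 2 1 k'))
      (E4 (r+1) k') := by
    have h : (R r 2 ++ 0 :: R (r+1) 1).reverse ++ (2 :: 1 :: alt2 2 1 k')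
        = (R (r+1) 1 ++ 0 :: R (r+1) 2) ++ (1 :: alt2 2 1 k') := by
      simp [List.reverse_append, List.replicate_succ']
    have h2 : E4 (r+1) k'
        = (R (r+1) 1 ++ 0 :: R (r+1) 2).reverse ++ (1 :: alt2 2 1 k') := by
      simp [E4, List.reverse_append, List.replicate_succ']
    rw [h, h2]
    exact step_flip (i := 2*r+3) (by simp; try omega) (by omega)
  exact ⟨_, f1, _, f2, rfl⟩

lemma fam4_ladder (j : ℕ) : ∀ k', ReachIn (2*j) (E4 0 (j + k')) (E4 j k') := by
  induction j with
  | zero => intro k'; rw [Nat.zero_add]; rfl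
  | succ j ih =>
    intro k'
    have h1 := ih (k'+1)
    rw [show j + (k'+1) = (j+1) + k' by omega] at h1
    have := reachIn_trans h1 (fam4_step j k')
    rw [show 2*j+2 = 2*(j+1) by omega] at this
    exact this

lemma fam4 (k : ℕ) : Good (2*k+3) (0 :: 1 :: alt2 2 1 (k+1)) := by
  have hs : (0 :: 1 :: alt2 2 1 (k+1)) = E4 0 (k+1) := by simp [E4]
  have hlad := fam4_ladder k 1
  have f1 : FlipStep (E4 k 1) (1 :: 2 :: (R (k+1) 1 ++ 0 :: R k 2)) := by
    have h : E4 k 1 = (R k 2 ++ 0 :: (R (k+1) 1 ++ [2,1])) ++ [] := by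
      simp [E4, alt2]
    have h2 : 1 :: 2 :: (R (k+1) 1 ++ 0 :: R k 2)
        = (R k 2 ++ 0 :: (R (k+1) 1 ++ [2,1])).reverse ++ [] := by
      simp [List.reverse_append]
    rw [h, h2]
    exact step_flip (i := 2*k+4) (by simp; try omega) (by omega)
  have f2 : FlipStep (1 :: 2 :: (R (k+1) 1 ++ 0 :: R k 2))
      (2 :: 1 :: (R (k+1) 1 ++ 0 :: R k 2)) := by
    have h : (1 :: 2 :: (R (k+1) 1 ++ 0 :: R k 2))
        = [1,2] ++ (R (k+1) 1 ++ 0 :: R k 2) := rfl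
    have h2 : (2 :: 1 :: (R (k+1) 1 ++ 0 :: R k 2))
        = [1,2].reverse ++ (R (k+1) 1 ++ 0 :: R k 2) := rfl
    rw [h, h2]
    exact step_flip (i := 2) (by simp) (by omega)
  have f3 : FlipStep (2 :: 1 :: (R (k+1) 1 ++ 0 :: R k 2))
      (0 :: (R (k+2) 1 ++ R (k+1) 2)) := by
    have h : (2 :: 1 :: (R (k+1) 1 ++ 0 :: R k 2))
        = (2 :: 1 :: R (k+1) 1 ++ [0]) ++ R k 2 := by
      simp [List.append_assoc]
    have h2 : (0 :: (R (k+2) 1 ++ R (k+1) 2))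
        = (2 :: 1 :: R (k+1) 1 ++ [0]).reverse ++ R k 2 := by
      simp [List.reverse_append, List.replicate_succ', List.replicate_succ]
    rw [h, h2]
    exact step_flip (i := k+4) (by simp; try omega) (by omega)
  have hreach : ReachIn (2*k+3) (0 :: 1 :: alt2 2 1 (k+1)) (0 :: (R (k+2) 1 ++ R (k+1) 2)) := by
    rw [hs]
    have tail3 : ReachIn 3 (E4 k 1) (0 :: (R (k+2) 1 ++ R (k+1) 2)) :=
      reachIn_step f1 (reachIn_step f2 (reachIn_one f3))
    exact reachIn_trans hlad tail3
  refine ⟨2*k+3, _, le_refl _, hreach, ?_⟩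
  have : (0 :: (R (k+2) 1 ++ R (k+1) 2)) = R 1 0 ++ (R (k+2) 1 ++ R (k+1) 2) := rfl
  rw [this]
  exact sorted012 1 (k+2) (k+1)

lemma alt2_length (a b : ℕ) : ∀ k, (alt2 a b k).length = 2*k
  | 0 => rfl
  | (k+1) => by
      rw [show alt2 a b (k+1) = a :: b :: alt2 a b k from rfl]
      simp [alt2_length a b k]; omega

lemma chain'_ne_reverse {l : List ℕ} (h : l.Chain' (· ≠ ·)) :
    l.reverse.Chain' (· ≠ ·) := by
  refine List.isChain_reverse.mpr (List.IsChain.imp ?_ h)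
  intro a b hab
  exact hab.symm

lemma F_single : ∀ (l : List ℕ), F (l.map (fun x => (x,1))) = l
  | [] => rfl
  | (x :: l) => by
      rw [List.map_cons, show F ((x,1) :: l.map (fun x => (x,1)))
        = List.replicate 1 x ++ F (l.map (fun x => (x,1))) from rfl, F_single l]
      rfl

lemma alt_struct_aux {a b : ℕ} (hab : a ≠ b) :
    ∀ (n : ℕ) (w : List ℕ), w.length ≤ n → w.Chain' (· ≠ ·) →
      (∀ x ∈ w, x = a ∨ x = b) →
      w.head? = some a → w.getLast? = some b → ∃ k, w = alt2 a b k := by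
  intro n
  induction n with
  | zero =>
    intro w hn _ _ hh _
    rcases w with _ | ⟨x, w0⟩
    · simp at hh
    · simp at hn
  | succ n ihn =>
    intro w hn hch hm hh hl
    rcases w with _ | ⟨x, w0⟩
    · simp at hh
    rcases w0 with _ | ⟨y, w'⟩
    · simp at hh hl
      exact absurd (hh.symm.trans hl) hab
    have hx : x = a := by simpa using hh
    subst hx
    obtain ⟨hxy, hch'⟩ := List.isChain_cons_cons.mp hch
    have hy : y = b := by
      rcases hm y (by simp) with h | h
      · exact absurd h.symm hxy
      · exact h
    subst hy
    rcases w' with _ | ⟨z, w''⟩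
    · exact ⟨1, rfl⟩
    · obtain ⟨hyz, hch''⟩ := List.isChain_cons_cons.mp hch'
      have hz : z = x := by
        rcases hm z (by simp) with h | h
        · exact h
        · exact absurd h.symm hyz
      have hl' : (z :: w'').getLast? = some y := by
        rw [List.getLast?_cons_cons, List.getLast?_cons_cons] at hl
        exact hl
      obtain ⟨k, hk⟩ := ihn (z :: w'') (by simp at hn ⊢; omega) hch''
        (fun u hu => hm u (List.mem_cons_of_mem _ (List.mem_cons_of_mem _ hu)))
        (by simp [hz]) hl'
      exact ⟨k+1, by rw [show alt2 x y (k+1) = x :: y :: alt2 x y k from rfl, ← hk]⟩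

lemma alt_struct {a b : ℕ} (hab : a ≠ b) (w : List ℕ) (hch : w.Chain' (· ≠ ·))
    (hm : ∀ x ∈ w, x = a ∨ x = b) (hh : w.head? = some a) (hl : w.getLast? = some b) :
    ∃ k, w = alt2 a b k :=
  alt_struct_aux hab w.length w (le_refl _) hch hm hh hl

lemma main : ∀ (m : ℕ) (t : List ℕ), t.length = m → t.Chain' (· ≠ ·) →
    (∀ a ∈ t, a < 3) → t ≠ [0,2,1] → Good (m - 1) t := by
  intro m
  induction m using Nat.strong_induction_on with
  | _ m IH =>
  intro t hlen hch hmem hne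
  by_cases h4 : m ≤ 4
  · have := base4 t (by omega) hmem hne
    rwa [hlen] at this
  push_neg at h4
  rcases t with _ | ⟨hd, tl⟩
  · exfalso; simp at hlen; omega
  have htl_ne : tl ≠ [] := by
    intro h; subst h; simp at hlen; omega
  have ht_ne : (hd :: tl) ≠ [] := List.cons_ne_nil _ _
  have hlen_tl : tl.length = m - 1 := by
    simp at hlen; omega
  -- the last symbol
  set v := (hd :: tl).getLast ht_ne with hv
  have hv3 : v < 3 := hmem v (List.getLast_mem ht_ne)
  by_cases hv2 : v = 2
  · -- Case A : strip the trailing 2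
    have hsplit : (hd :: tl).dropLast ++ [2] = hd :: tl := by
      conv_rhs => rw [← List.dropLast_append_getLast ht_ne]
      rw [← hv, hv2]
    have hlen' : (hd :: tl).dropLast.length = m - 1 := by
      rw [List.length_dropLast, hlen]
    have hgood : Good (m - 1 - 1) (hd :: tl).dropLast := by
      refine IH (m-1) (by omega) _ hlen' (hch.prefix (List.dropLast_prefix _))
        (fun a ha => hmem a (List.mem_of_mem_dropLast ha)) ?_
      intro h
      have := congrArg List.length h
      rw [hlen'] at this
      simp at this; omega
    have hgood2 := good_append_max (c := 2) hgood
      (fun a ha => by have := hmem a (List.mem_of_mem_dropLast ha); omega)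
    rw [hsplit] at hgood2
    exact good_mono hgood2 (by omega)
  · -- last symbol is not 2
    by_cases hB : hd ∈ tl
    · -- Case B1 : head occurs again, merge
      obtain ⟨X, Y, hXY⟩ := List.append_of_mem hB
      subst hXY
      have hlenXY : X.length + Y.length + 2 = m := by
        simp at hlen; omega
      -- the collapsed string
      set q := X.reverse ++ hd :: Y with hq
      have hlenq : q.length = m - 1 := by simp [hq]; omega
      have hchq : q.Chain' (· ≠ ·) := by
        rw [hq]; unfold List.Chain'; rw [List.isChain_append]
        refine ⟨chain'_ne_reverse ?_, ?_, ?_⟩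
        · have : (hd :: X).Chain' (· ≠ ·) :=
            hch.prefix ⟨hd :: Y, by simp⟩
          exact this.tail
        · have : ((hd :: Y) : List ℕ).Chain' (· ≠ ·) :=
            hch.suffix ⟨hd :: X, by simp⟩
          exact this
        · intro x hx y hy
          rw [List.getLast?_reverse] at hx
          rw [List.head?_cons] at hy
          rcases X with _ | ⟨x0, X'⟩
          · simp at hx
          · simp at hx
            subst hx
            have : hd ≠ x0 := (List.isChain_cons_cons.mp hch).1
            rw [← Option.some_inj.mp hy]
            exact this.symm
      have hgoodq : Good (m - 1 - 1) q := by
        refine IH (m-1) (by omega) _ hlenq hchq ?_ ?_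
        · intro a ha
          apply hmem
          rw [hq] at ha
          rcases List.mem_append.mp ha with h | h
          · exact List.mem_cons_of_mem _ (List.mem_append_left _ (List.mem_reverse.mp h))
          · rcases List.mem_cons.mp h with rfl | h
            · exact List.mem_cons_self
            · exact List.mem_cons_of_mem _ (List.mem_append_right _ (List.mem_cons_of_mem _ h))
        · intro h
          have := congrArg List.length h
          rw [hlenq] at this
          simp at this; omega
      -- block structure
      set Lb : List (ℕ × ℕ) :=
        X.reverse.map (fun x => (x,1)) ++ (hd,2) :: Y.map (fun x => (x,1)) with hLb
      have hFLb : F Lb = X.reverse ++ hd :: hd :: Y := by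
        rw [hLb, F_append, F_single]
        rw [show F ((hd,2) :: Y.map (fun x => (x,1)))
          = List.replicate 2 hd ++ F (Y.map (fun x => (x,1))) from rfl, F_single]
        rfl
      have hmapLb : Lb.map Prod.fst = q := by
        rw [hLb, hq, List.map_append, List.map_map, List.map_cons, List.map_map]
        simp [Function.comp_def]
      have hszLb : ∀ p ∈ Lb, 1 ≤ p.2 := by
        intro p hp
        rw [hLb] at hp
        rcases List.mem_append.mp hp with h | h
        · obtain ⟨x, _, rfl⟩ := List.mem_map.mp h; omega
        · rcases List.mem_cons.mp h with rfl | h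
          · omega
          · obtain ⟨x, _, rfl⟩ := List.mem_map.mp h; omega
      have hgoodu : Good (m - 1 - 1) (X.reverse ++ hd :: hd :: Y) := by
        rw [← hFLb]
        exact good_blocks hszLb (hmapLb ▸ hgoodq)
      have hstep : FlipStep (hd :: (X ++ hd :: Y)) (X.reverse ++ hd :: hd :: Y) := by
        have h1 : hd :: (X ++ hd :: Y) = (hd :: X) ++ (hd :: Y) := by simp
        have h2 : X.reverse ++ hd :: hd :: Y = (hd :: X).reverse ++ (hd :: Y) := by
          simp
        rw [h1, h2]
        exact step_flip (i := X.length + 1) (by simp) (by omega)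
      have := good_step hstep hgoodu
      have hmm : m - 1 - 1 + 1 = m - 1 := by omega
      rwa [hmm] at this
    · -- Case B2 : head is unique
      have hhd3 : hd < 3 := hmem hd (List.mem_cons_self)
      have hvtl : tl.getLast? = some v := by
        rw [hv, List.getLast_cons htl_ne, ← List.getLast?_eq_getLast htl_ne]
      have hd3 : hd = 0 ∨ hd = 1 ∨ hd = 2 := by omega
      rcases hd3 with rfl | rfl | rfl
      · -- hd = 0 : tail over {2,1}, ends in 1 : families 3 / 4
        have hmem' : ∀ x ∈ tl, x = 2 ∨ x = 1 := by
          intro x hx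
          have h3 := hmem x (List.mem_cons_of_mem _ hx)
          have : x ≠ 0 := fun h => hB (h ▸ hx)
          omega
        have hv1 : v = 1 := by
          rcases hmem' v (List.mem_of_mem_getLast? hvtl) with h | h
          · exact absurd h hv2
          · exact h
        rcases tl with _ | ⟨z, tl'⟩
        · exact absurd rfl htl_ne
        rcases hmem' z (List.mem_cons_self) with hz | hz
        · -- t = 0 :: alt2 2 1 k
          subst hz
          obtain ⟨k, hk⟩ := alt_struct (show (2:ℕ) ≠ 1 by omega) (2 :: tl') hch.tail
            hmem' rfl (hv1 ▸ hvtl)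
          have hlk : m = 2*k + 1 := by
            have := congrArg List.length hk
            rw [alt2_length] at this
            simp at this hlen
            omega
          obtain ⟨K, rfl⟩ : ∃ K, k = K + 2 := ⟨k - 2, by omega⟩
          have := fam3 K
          rw [hk, show m - 1 = 2*K+4 by omega]
          exact this
        · -- t = 0 :: 1 :: alt2 2 1 k
          subst hz
          have htl'_ne : tl' ≠ [] := by
            intro h; subst h; simp at hlen; omega
          rcases tl' with _ | ⟨z', tl''⟩
          · exact absurd rfl htl'_ne
          have hz' : z' = 2 := by
            rcases hmem' z' (List.mem_cons_of_mem _ (List.mem_cons_self)) with h | h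
            · exact h
            · exfalso
              exact (List.isChain_cons_cons.mp hch.tail).1 h.symm
          subst hz'
          obtain ⟨k, hk⟩ := alt_struct (show (2:ℕ) ≠ 1 by omega) (2 :: tl'')
            hch.tail.tail (fun x hx => hmem' x (List.mem_cons_of_mem _ hx)) rfl
            (by rw [← List.getLast?_cons_cons (a := 1)]; exact hv1 ▸ hvtl)
          have hlk : m = 2*k + 2 := by
            have := congrArg List.length hk
            rw [alt2_length] at this
            simp at this hlen
            omega
          obtain ⟨K, rfl⟩ : ∃ K, k = K + 1 := ⟨k - 1, by omega⟩
          have := fam4 K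
          rw [hk, show m - 1 = 2*K+3 by omega]
          exact this
      · -- hd = 1 : tail over {2,0}, ends in 0 : families 1 / 2
        have hmem' : ∀ x ∈ tl, x = 2 ∨ x = 0 := by
          intro x hx
          have h3 := hmem x (List.mem_cons_of_mem _ hx)
          have : x ≠ 1 := fun h => hB (h ▸ hx)
          omega
        have hv0 : v = 0 := by
          rcases hmem' v (List.mem_of_mem_getLast? hvtl) with h | h
          · exact absurd h hv2
          · exact h
        rcases tl with _ | ⟨z, tl'⟩
        · exact absurd rfl htl_ne
        rcases hmem' z (List.mem_cons_self) with hz | hz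
        · subst hz
          obtain ⟨k, hk⟩ := alt_struct (show (2:ℕ) ≠ 0 by omega) (2 :: tl') hch.tail
            hmem' rfl (hv0 ▸ hvtl)
          have hlk : m = 2*k + 1 := by
            have := congrArg List.length hk
            rw [alt2_length] at this
            simp at this hlen
            omega
          have := fam1 k
          rw [hk, show m - 1 = 2*k by omega]
          exact this
        · subst hz
          have htl'_ne : tl' ≠ [] := by
            intro h; subst h; simp at hlen; omega
          rcases tl' with _ | ⟨z', tl''⟩
          · exact absurd rfl htl'_ne
          have hz' : z' = 2 := by
            rcases hmem' z' (List.mem_cons_of_mem _ (List.mem_cons_self)) with h | h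
            · exact h
            · exfalso
              exact (List.isChain_cons_cons.mp hch.tail).1 h.symm
          subst hz'
          obtain ⟨k, hk⟩ := alt_struct (show (2:ℕ) ≠ 0 by omega) (2 :: tl'')
            hch.tail.tail (fun x hx => hmem' x (List.mem_cons_of_mem _ hx)) rfl
            (by rw [← List.getLast?_cons_cons (a := 0)]; exact hv0 ▸ hvtl)
          have hlk : m = 2*k + 2 := by
            have := congrArg List.length hk
            rw [alt2_length] at this
            simp at this hlen
            omega
          have := fam2 k
          rw [hk, show m - 1 = 2*k+1 by omega]
          exact this
      · -- hd = 2 : full flip then strip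
        have hgood : Good (m - 1 - 1) tl.reverse := by
          refine IH (m-1) (by omega) _ (by simp [hlen_tl]) (chain'_ne_reverse hch.tail)
            (fun a ha => hmem a (List.mem_cons_of_mem _ (List.mem_reverse.mp ha))) ?_
          intro h
          have h2 : (2:ℕ) ∈ tl.reverse := by rw [h]; simp
          exact hB (List.mem_reverse.mp h2)
        have hgood2 := good_append_max (c := 2) hgood
          (fun a ha => by
            have := hmem a (List.mem_cons_of_mem _ (List.mem_reverse.mp ha)); omega)
        have hstep : FlipStep (2 :: tl) (tl.reverse ++ [2]) := by
          refine ⟨m, by omega, by omega, ?_⟩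
          unfold pflip
          rw [← hlen, List.take_length, List.drop_length]
          simp
        have := good_step hstep hgood2
        have hmm : m - 1 - 1 + 1 = m - 1 := by omega
        rwa [hmm] at this

end Work


theorem sorting_ternary_upper_bound (n : ℕ) (s : List ℕ)
    (hlen : s.length = n) (hfull : FullyKary 3 s) (hnorm : Normalized s)
    (hlast : s.getLast? = some 2) (hne : s ≠ [0,2,1,2]) :
    sortDist s ≤ n - 2 := by
  have hs_ne : s ≠ [] := by
    intro h
    rw [h] at hlast
    simp at hlast
  have hL2 : s.getLast hs_ne = 2 := by
    rw [List.getLast?_eq_getLast hs_ne] at hlast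
    exact Option.some_inj.mp hlast
  have hsplit : s.dropLast ++ [2] = s := by
    conv_rhs => rw [← List.dropLast_append_getLast hs_ne]
    rw [hL2]
  have hgood : Work.Good (s.dropLast.length - 1) s.dropLast := by
    refine Work.main s.dropLast.length s.dropLast rfl
      (List.IsChain.prefix hnorm (List.dropLast_prefix s))
      (fun a ha => (hfull a).mp (List.mem_of_mem_dropLast ha)) ?_
    intro h
    apply hne
    rw [← hsplit, h]
    rfl
  have hgood2 := Work.good_append_max (c := 2) hgood
    (fun a ha => by
      have := (hfull a).mp (List.mem_of_mem_dropLast ha)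
      omega)
  rw [hsplit] at hgood2
  have hb : s.dropLast.length - 1 = n - 2 := by
    rw [List.length_dropLast, hlen]
    omega
  rw [hb] at hgood2
  exact Work.good_sortDist hgood2
end
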